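/- arXiv:0904.0073 — 3 statements merged into one kernel-verified Lean document; each statement's English description precedes it below -/
import Mathlib

section
/- There is a surjective group homomorphism Φ : Homeo(L̄₊ⁿ) → Sₙ that splits, given by the action of a homeomorphism on the n path components of L̄₊ⁿ of dimension n−1 (equivalently, on the path components whose label p ∈ {0,Ω}ⁿ has exactly one coordinate equal to Ω); the splitting is given by coordinate-permutation homeomorphisms. -/
/-- The set of countable ordinals (ordinals less than the first uncountable ordinal `ω₁`). -/
def SOmega : Type 1 := Set.Iio (Cardinal.aleph 1).ord

noncomputable instance : LinearOrder SOmega :=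
  inferInstanceAs (LinearOrder (Set.Iio (Cardinal.aleph 1).ord))

/-- The half-open long line `L₊ = [0,1) × S_Ω` with the lexicographic order
(ordinal coordinate first, then the real coordinate). -/
def LongLinePlus : Type 1 := SOmega ×ₗ (Set.Ico (0:ℝ) 1)

noncomputable instance : LinearOrder LongLinePlus :=
  inferInstanceAs (LinearOrder (SOmega ×ₗ (Set.Ico (0:ℝ) 1)))

/-- `L₊` carries the order topology. -/
noncomputable instance : TopologicalSpace LongLinePlus := Preorder.topology LongLinePlus
instance : OrderTopology LongLinePlus := ⟨rfl⟩

/-- The extended half-long line `L̄₊ = L₊ ∪ {Ω}`, with `Ω` adjoined as a top element,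
given the order topology. -/
def LongLinePlusBar : Type 1 := WithTop LongLinePlus

noncomputable instance : LinearOrder LongLinePlusBar :=
  inferInstanceAs (LinearOrder (WithTop LongLinePlus))

instance : OrderTop LongLinePlusBar := inferInstanceAs (OrderTop (WithTop LongLinePlus))

noncomputable instance : TopologicalSpace LongLinePlusBar := Preorder.topology LongLinePlusBar
instance : OrderTopology LongLinePlusBar := ⟨rfl⟩

/-- The inclusion `L₊ ↪ L̄₊`. -/
def LongLinePlus.toBar (x : LongLinePlus) : LongLinePlusBar := WithTop.some x

namespace LLB

open Set TopologicalSpace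

noncomputable section

abbrev om1 : Ordinal := (Cardinal.aleph 1).ord

lemma om1_limit : Order.IsSuccLimit om1 := Cardinal.isSuccLimit_ord (Cardinal.aleph0_le_aleph 1)

abbrev I01 : Set ℝ := Set.Ico (0:ℝ) 1

/-- make an element of L₊ -/
def mk' (a : Ordinal) (ha : a < om1) (t : I01) : LongLinePlus :=
  toLex ((⟨a, ha⟩ : SOmega), t)

def z01 : I01 := ⟨0, le_refl 0, zero_lt_one⟩

lemma mk'_lt_mk' {a b : Ordinal} {ha hb} {t s : I01} :
    mk' a ha t < mk' b hb s ↔ a < b ∨ (a = b ∧ t < s) := by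
  show (toLex _ : SOmega ×ₗ I01) < toLex _ ↔ _
  rw [Prod.Lex.lt_iff]
  constructor
  · rintro (h | ⟨h1, h2⟩)
    · exact Or.inl h
    · exact Or.inr ⟨congrArg Subtype.val h1, h2⟩
  · rintro (h | ⟨h1, h2⟩)
    · exact Or.inl h
    · exact Or.inr ⟨Subtype.ext h1, h2⟩

lemma mk'_le_mk' {a b : Ordinal} {ha hb} {t s : I01} :
    mk' a ha t ≤ mk' b hb s ↔ a < b ∨ (a = b ∧ t ≤ s) := by
  show (toLex _ : SOmega ×ₗ I01) ≤ toLex _ ↔ _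
  rw [Prod.Lex.le_iff]
  constructor
  · rintro (h | ⟨h1, h2⟩)
    · exact Or.inl h
    · exact Or.inr ⟨congrArg Subtype.val h1, h2⟩
  · rintro (h | ⟨h1, h2⟩)
    · exact Or.inl h
    · exact Or.inr ⟨Subtype.ext h1, h2⟩

/-- destruct an element of L₊ -/
lemma exists_eq_mk' (x : LongLinePlus) : ∃ a ha t, x = mk' a ha t :=
  ⟨(ofLex (show SOmega ×ₗ I01 from x)).1.1, (ofLex (show SOmega ×ₗ I01 from x)).1.2,
   (ofLex (show SOmega ×ₗ I01 from x)).2, rfl⟩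

end

end LLB

section
open Set TopologicalSpace
namespace LLB
noncomputable section

def mkb (a : Ordinal) (ha : a < om1) (t : I01) : LongLinePlusBar := (mk' a ha t).toBar

lemma mkb_lt_mkb {a b : Ordinal} {ha hb} {t s : I01} :
    mkb a ha t < mkb b hb s ↔ a < b ∨ (a = b ∧ t < s) :=
  (WithTop.coe_lt_coe (α := LongLinePlus)).trans mk'_lt_mk'

lemma mkb_le_mkb {a b : Ordinal} {ha hb} {t s : I01} :
    mkb a ha t ≤ mkb b hb s ↔ a < b ∨ (a = b ∧ t ≤ s) :=
  (WithTop.coe_le_coe (α := LongLinePlus)).trans mk'_le_mk'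

lemma mkb_ne_top {a ha t} : mkb a ha t ≠ ⊤ := WithTop.coe_ne_top

lemma mkb_lt_top {a ha t} : mkb a ha t < ⊤ := lt_top_iff_ne_top.2 mkb_ne_top

lemma exists_eq_mkb {z : LongLinePlusBar} (hz : z ≠ ⊤) : ∃ a ha t, z = mkb a ha t := by
  rcases WithTop.ne_top_iff_exists.1 hz with ⟨x, rfl⟩
  rcases exists_eq_mk' x with ⟨a, ha, t, rfl⟩
  exact ⟨a, ha, t, rfl⟩

lemma succ_lt_om1 {a : Ordinal} (ha : a < om1) : a + 1 < om1 := by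
  rw [Ordinal.add_one_eq_succ]; exact om1_limit.succ_lt ha

def bot' : LongLinePlusBar := mkb 0 om1_limit.pos z01

lemma bot'_le (z : LongLinePlusBar) : bot' ≤ z := by
  rcases eq_or_ne z ⊤ with rfl | hz
  · exact le_top
  · rcases exists_eq_mkb hz with ⟨a, ha, t, rfl⟩
    rcases eq_or_lt_of_le (zero_le (a := a)) with h | h
    · exact mkb_le_mkb.2 (Or.inr ⟨h.symm ▸ rfl, t.2.1⟩)
    · exact mkb_le_mkb.2 (Or.inl h)

lemma lt_add_one (a : Ordinal) : a < a + 1 := by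
  rw [Ordinal.add_one_eq_succ]; exact Order.lt_succ a

lemma lt_mkb_succ {a : Ordinal} {ha : a < om1} {t : I01} :
    mkb a ha t < mkb (a + 1) (succ_lt_om1 ha) z01 :=
  mkb_lt_mkb.2 (Or.inl (lt_add_one a))

/-- every non-top element has something strictly above it, below top -/
lemma exists_between_top {z : LongLinePlusBar} (hz : z ≠ ⊤) :
    ∃ w : LongLinePlusBar, z < w ∧ w ≠ ⊤ := by
  rcases exists_eq_mkb hz with ⟨a, ha, t, rfl⟩
  exact ⟨mkb (a+1) (succ_lt_om1 ha) z01, lt_mkb_succ, mkb_ne_top⟩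

/-- countable subsets of `L₊` are bounded strictly below `⊤`. -/
lemma exists_bound_of_countable (c : Set LongLinePlusBar) (hc : c.Countable) :
    ∃ b : LongLinePlusBar, b ≠ ⊤ ∧ ∀ z ∈ c, z ≠ ⊤ → z < b := by
  rcases c.eq_empty_or_nonempty with rfl | hne
  · exact ⟨bot', mkb_ne_top, by simp⟩
  rcases hc.exists_eq_range hne with ⟨f, rfl⟩
  have key : ∀ k : ℕ, ∃ a : Ordinal, a < om1 ∧ (f k ≠ ⊤ → ∃ (ha : a < om1), ∃ t, f k = mkb a ha t) := by
    intro k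
    rcases eq_or_ne (f k) ⊤ with h | h
    · exact ⟨0, om1_limit.pos, fun h' => absurd h h'⟩
    · rcases exists_eq_mkb h with ⟨a, ha, t, hfk⟩
      exact ⟨a, ha, fun _ => ⟨ha, t, hfk⟩⟩
  choose g hg1 hg2 using key
  have hsup : iSup g < om1 := by
    refine Cardinal.iSup_lt_ord_of_isRegular Cardinal.isRegular_aleph_one ?_ hg1
    rw [Cardinal.mk_nat]
    exact Cardinal.aleph0_lt_aleph_one
  refine ⟨mkb (iSup g + 1) (succ_lt_om1 hsup) z01, mkb_ne_top, ?_⟩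
  rintro z ⟨k, rfl⟩ hz
  rcases hg2 k hz with ⟨ha, t, hfk⟩
  rw [hfk]
  exact mkb_lt_mkb.2 (Or.inl (lt_of_le_of_lt (Ordinal.le_iSup g k) (lt_add_one _)))

end
end LLB
end
section
open Set TopologicalSpace
namespace LLB
noncomputable section

/-- closure membership criterion in an order topology, interior point version -/
lemma mem_closure_of_between {α : Type*} [LinearOrder α] [TopologicalSpace α] [OrderTopology α]
    {p : α} (hl : ∃ l, l < p) (hu : ∃ u, p < u) {s : Set α}
    (h : ∀ l u, l < p → p < u → ∃ z ∈ s, l < z ∧ z < u) : p ∈ closure s := by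
  rw [mem_closure_iff_nhds]
  intro t ht
  rcases (mem_nhds_iff_exists_Ioo_subset' hl hu).1 ht with ⟨l, u, hp, hsub⟩
  rcases h l u hp.1 hp.2 with ⟨z, hz, h1, h2⟩
  exact ⟨z, hsub ⟨h1, h2⟩, hz⟩

/-- closure membership criterion at the top -/
lemma top_mem_closure {s : Set LongLinePlusBar}
    (h : ∀ l : LongLinePlusBar, l ≠ ⊤ → ∃ z ∈ s, l < z) : (⊤ : LongLinePlusBar) ∈ closure s := by
  rw [mem_closure_iff_nhds]
  intro t ht
  rcases exists_Ioc_subset_of_mem_nhds ht ⟨bot', lt_top_iff_ne_top.2 mkb_ne_top⟩ with ⟨l, hl, hsub⟩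
  rcases h l (ne_top_of_lt hl) with ⟨z, hz, hlz⟩
  exact ⟨z, hsub ⟨hlz, le_top⟩, hz⟩

lemma not_separable_Icc {u : LongLinePlusBar} (hu : u ≠ ⊤) :
    ¬ IsSeparable (Icc u (⊤ : LongLinePlusBar)) := by
  rintro ⟨c, hc, hsub⟩
  rcases exists_bound_of_countable c hc with ⟨b, hb, hbd⟩
  rcases exists_between_top (show max b u ≠ ⊤ by
    rcases max_cases b u with ⟨h, _⟩ | ⟨h, _⟩ <;> rw [h] <;> assumption) with ⟨p, hp1, hp2⟩
  have hpIcc : p ∈ Icc u ⊤ := ⟨le_of_lt (lt_of_le_of_lt (le_max_right b u) hp1), le_top⟩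
  have hpc := hsub hpIcc
  rw [mem_closure_iff] at hpc
  rcases hpc (Ioo b ⊤) isOpen_Ioo
      ⟨lt_of_le_of_lt (le_max_left b u) hp1, lt_top_iff_ne_top.2 hp2⟩ with ⟨z, ⟨hz1, hz2⟩, hzc⟩
  exact absurd (hbd z hzc (ne_top_of_lt hz2)) (not_lt.2 hz1.le)

/-- continuity criterion into an order topology -/
lemma continuous_to_order {X α : Type*} [TopologicalSpace X] [LinearOrder α]
    [TopologicalSpace α] [OrderTopology α] {f : X → α}
    (h1 : ∀ a, IsOpen (f ⁻¹' Ioi a)) (h2 : ∀ a, IsOpen (f ⁻¹' Iio a)) : Continuous f := by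
  rw [OrderTopology.topology_eq_generate_intervals (α := α)]
  refine continuous_generateFrom_iff.mpr ?_
  rintro s ⟨a, rfl | rfl⟩
  exacts [h1 a, h2 a]

end
end LLB
end
section
open Set TopologicalSpace
namespace LLB
noncomputable section

lemma mk'_inj {a b : Ordinal} {ha hb} {t s : I01} (h : mk' a ha t = mk' b hb s) :
    a = b ∧ t = s := by
  have h' : ((⟨a, ha⟩ : SOmega), t) = ((⟨b, hb⟩ : SOmega), s) :=
    congrArg (ofLex (α := SOmega × I01)) h
  exact ⟨congrArg (fun p => (Subtype.val p.1)) h', congrArg Prod.snd h'⟩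

lemma mkb_inj {a b : Ordinal} {ha hb} {t s : I01} (h : mkb a ha t = mkb b hb s) :
    a = b ∧ t = s :=
  mk'_inj (WithTop.coe_inj.1 h)

def gfib (a : Ordinal) (ha : a < om1) : I01 → LongLinePlusBar := fun t => mkb a ha t

lemma isOpen_I01_Ioi (s : I01) : IsOpen {t : I01 | s < t} := by
  have : {t : I01 | s < t} = (Subtype.val) ⁻¹' (Ioi (s : ℝ)) := by
    ext t; exact Iff.rfl
  rw [this]; exact isOpen_Ioi.preimage continuous_subtype_val

lemma isOpen_I01_Iio (s : I01) : IsOpen {t : I01 | t < s} := by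
  have : {t : I01 | t < s} = (Subtype.val) ⁻¹' (Iio (s : ℝ)) := by
    ext t; exact Iff.rfl
  rw [this]; exact isOpen_Iio.preimage continuous_subtype_val

lemma continuous_gfib (a : Ordinal) (ha : a < om1) : Continuous (gfib a ha) := by
  refine continuous_to_order ?_ ?_
  · intro z
    rcases eq_or_ne z ⊤ with rfl | hz
    · have : gfib a ha ⁻¹' Ioi ⊤ = ∅ := by
        ext t; simp only [mem_preimage, mem_Ioi, mem_empty_iff_false, iff_false]
        exact not_top_lt
      rw [this]; exact isOpen_empty
    · rcases exists_eq_mkb hz with ⟨b, hb, s, rfl⟩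
      rcases lt_trichotomy b a with h | h | h
      · have : gfib a ha ⁻¹' Ioi (mkb b hb s) = univ := by
          ext t; simp only [mem_preimage, mem_Ioi, mem_univ, iff_true]
          exact mkb_lt_mkb.2 (Or.inl h)
        rw [this]; exact isOpen_univ
      · subst h
        have : gfib b ha ⁻¹' Ioi (mkb b hb s) = {t | s < t} := by
          ext t
          constructor
          · intro h'
            rcases mkb_lt_mkb.1 h' with h'' | ⟨_, h''⟩
            · exact absurd h'' (lt_irrefl b)
            · exact h''
          · exact fun h' => mkb_lt_mkb.2 (Or.inr ⟨rfl, h'⟩)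
        rw [this]; exact isOpen_I01_Ioi s
      · have : gfib a ha ⁻¹' Ioi (mkb b hb s) = ∅ := by
          ext t; simp only [mem_preimage, mem_Ioi, mem_empty_iff_false, iff_false, gfib]
          intro hlt
          rcases mkb_lt_mkb.1 hlt with h' | ⟨h', _⟩
          · exact absurd (h'.trans h) (lt_irrefl b)
          · exact absurd (h' ▸ h) (lt_irrefl a)
        rw [this]; exact isOpen_empty
  · intro z
    rcases eq_or_ne z ⊤ with rfl | hz
    · have : gfib a ha ⁻¹' Iio ⊤ = univ := by
        ext t; simp only [mem_preimage, mem_Iio, mem_univ, iff_true]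
        exact mkb_lt_top
      rw [this]; exact isOpen_univ
    · rcases exists_eq_mkb hz with ⟨b, hb, s, rfl⟩
      rcases lt_trichotomy a b with h | h | h
      · have : gfib a ha ⁻¹' Iio (mkb b hb s) = univ := by
          ext t; simp only [mem_preimage, mem_Iio, mem_univ, iff_true]
          exact mkb_lt_mkb.2 (Or.inl h)
        rw [this]; exact isOpen_univ
      · subst h
        have : gfib a ha ⁻¹' Iio (mkb a hb s) = {t | t < s} := by
          ext t
          constructor
          · intro h'
            rcases mkb_lt_mkb.1 h' with h'' | ⟨_, h''⟩
            · exact absurd h'' (lt_irrefl a)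
            · exact h''
          · exact fun h' => mkb_lt_mkb.2 (Or.inr ⟨rfl, h'⟩)
        rw [this]; exact isOpen_I01_Iio s
      · have : gfib a ha ⁻¹' Iio (mkb b hb s) = ∅ := by
          ext t; simp only [mem_preimage, mem_Iio, mem_empty_iff_false, iff_false, gfib]
          intro hlt
          rcases mkb_lt_mkb.1 hlt with h' | ⟨h', _⟩
          · exact absurd (h'.trans h) (lt_irrefl a)
          · exact absurd (h' ▸ h) (lt_irrefl b)
        rw [this]; exact isOpen_empty

instance : PreconnectedSpace I01 := Subtype.preconnectedSpace isPreconnected_Ico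

end
end LLB
end
section
open Set TopologicalSpace
namespace LLB
noncomputable section

lemma mkb_mono_ord {a b : Ordinal} {ha hb} {t : I01} (h : a < b) :
    mkb a ha t < mkb b hb z01 := mkb_lt_mkb.2 (Or.inl h)

lemma isPreconnected_IicPt : ∀ (a : Ordinal) (ha : a < om1),
    IsPreconnected (Iic (mkb a ha z01)) := by
  intro a
  induction a using Ordinal.induction with
  | _ a IH =>
  intro ha
  rcases Ordinal.zero_or_succ_or_isSuccLimit a with rfl | ⟨b, rfl⟩ | hlim
  · have : Iic (mkb 0 ha z01) = {bot'} := by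
      apply Subset.antisymm
      · intro z hz
        exact mem_singleton_iff.2 (le_antisymm hz (bot'_le _))
      · intro z hz
        rw [mem_singleton_iff] at hz; subst hz
        exact mem_Iic.2 (le_refl _)
    rw [this]; exact isPreconnected_singleton
  · -- successor case
    have hb : b < om1 := (Order.lt_succ b).trans ha
    have hbs : b < Order.succ b := Order.lt_succ b
    have hle : mkb b hb z01 ≤ mkb (Order.succ b) ha z01 := (mkb_mono_ord hbs).le
    have hR : IsPreconnected (range (gfib b hb)) := isPreconnected_range (continuous_gfib b hb)
    have hRJ : range (gfib b hb) ⊆ Icc (mkb b hb z01) (mkb (Order.succ b) ha z01) := by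
      rintro z ⟨t, rfl⟩
      exact ⟨mkb_le_mkb.2 (Or.inr ⟨rfl, t.2.1⟩), (mkb_mono_ord hbs).le⟩
    have hJcl : Icc (mkb b hb z01) (mkb (Order.succ b) ha z01) ⊆ closure (range (gfib b hb)) := by
      rintro z ⟨hz1, hz2⟩
      have hzt : z ≠ ⊤ := ne_top_of_le_ne_top mkb_ne_top hz2
      rcases exists_eq_mkb hzt with ⟨c, hc, t, rfl⟩
      rcases mkb_le_mkb.1 hz2 with h2 | ⟨h2, h2'⟩
      · -- c < succ b, so c ≤ b; combined with b ≤ c we get c = b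
        have hcb : c = b := by
          rcases mkb_le_mkb.1 hz1 with h1 | ⟨h1, _⟩
          · exact absurd h2 (not_lt.2 (Order.succ_le_of_lt h1))
          · exact h1.symm
        subst hcb
        exact subset_closure ⟨t, rfl⟩
      · -- z = the successor point
        have ht : t = z01 := le_antisymm h2' t.2.1
        subst ht; subst h2
        refine mem_closure_of_between ⟨mkb b hb z01, mkb_mono_ord hbs⟩ ⟨⊤, mkb_lt_top⟩ ?_
        intro l u hl hu
        rcases exists_eq_mkb (ne_top_of_lt hl) with ⟨d, hd, s, rfl⟩
        rcases mkb_lt_mkb.1 hl with h' | ⟨h', h''⟩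
        · -- d < succ c,  i.e. d ≤ c
          have hdb : d ≤ b := Order.lt_succ_iff.1 h'
          rcases eq_or_lt_of_le hdb with rfl | hdb'
          · -- same fiber: pick a real between s and 1
            have hs1 : (s : ℝ) < 1 := s.2.2
            set r : ℝ := ((s : ℝ) + 1) / 2 with hr
            have hsr : (s : ℝ) < r := by rw [hr]; linarith
            have hr1 : r < 1 := by rw [hr]; linarith
            have hr0 : (0:ℝ) ≤ r := le_of_lt (lt_of_le_of_lt s.2.1 hsr)
            refine ⟨gfib d hd ⟨r, hr0, hr1⟩, ⟨⟨r, hr0, hr1⟩, rfl⟩, ?_, ?_⟩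
            · exact mkb_lt_mkb.2 (Or.inr ⟨rfl, hsr⟩)
            · exact lt_trans (mkb_mono_ord (Order.lt_succ d)) hu
          · refine ⟨gfib b hb z01, ⟨z01, rfl⟩, mkb_mono_ord hdb', ?_⟩
            exact lt_trans (mkb_mono_ord hbs) hu
        · exact absurd h'' (not_lt.2 s.2.1)
    have hJ : IsPreconnected (Icc (mkb b hb z01) (mkb (Order.succ b) ha z01)) :=
      hR.subset_closure hRJ hJcl
    have key : Iic (mkb (Order.succ b) ha z01) =
        Iic (mkb b hb z01) ∪ Icc (mkb b hb z01) (mkb (Order.succ b) ha z01) :=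
      (Iic_union_Icc_eq_Iic hle).symm
    rw [key]
    exact IsPreconnected.union (mkb b hb z01) (mem_Iic.2 (le_refl _)) ⟨le_refl _, hle⟩
      (IH b hbs hb) hJ
  · -- limit case
    set U : Set LongLinePlusBar :=
      ⋃₀ {s | ∃ (b : Ordinal) (hb : b < a), s = Iic (mkb b (hb.trans ha) z01)} with hUdef
    have hU : IsPreconnected U := by
      refine isPreconnected_sUnion bot' _ ?_ ?_
      · rintro s ⟨b, hb, rfl⟩; exact bot'_le _
      · rintro s ⟨b, hb, rfl⟩; exact IH b hb _
    have hUsub : U ⊆ Iic (mkb a ha z01) := by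
      rintro z ⟨s, ⟨b, hb, rfl⟩, hz⟩
      exact le_trans hz (mkb_mono_ord hb).le
    have hcl : Iic (mkb a ha z01) ⊆ closure U := by
      intro z hz
      rcases eq_or_ne z (mkb a ha z01) with rfl | hne
      · refine mem_closure_of_between ⟨bot', mkb_mono_ord hlim.pos⟩ ⟨⊤, mkb_lt_top⟩ ?_
        intro l u hl hu
        rcases exists_eq_mkb (ne_top_of_lt hl) with ⟨d, hd, s, rfl⟩
        have hda : d < a := by
          rcases mkb_lt_mkb.1 hl with h' | ⟨h', h''⟩
          · exact h'
          · exact absurd h'' (not_lt.2 s.2.1)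
        have hsa : d + 1 < a := by
          rw [Ordinal.add_one_eq_succ]; exact hlim.succ_lt hda
        refine ⟨mkb (d+1) (hsa.trans ha) z01, ?_, mkb_mono_ord (lt_add_one d), ?_⟩
        · exact ⟨Iic (mkb (d+1) (hsa.trans ha) z01), ⟨d+1, hsa, rfl⟩, mem_Iic.2 (le_refl _)⟩
        · exact lt_trans (mkb_mono_ord hsa) hu
      · -- z strictly below: z is in U
        refine subset_closure ?_
        have hzt : z ≠ ⊤ := ne_top_of_le_ne_top mkb_ne_top hz
        rcases exists_eq_mkb hzt with ⟨c, hc, t, rfl⟩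
        have hca : c < a := by
          rcases mkb_le_mkb.1 hz with h' | ⟨h', h''⟩
          · exact h'
          · exact absurd (by subst h'; exact congrArg _ (le_antisymm h'' t.2.1) :
              mkb c hc t = mkb a ha z01) hne
        have hsa : c + 1 < a := by
          rw [Ordinal.add_one_eq_succ]; exact hlim.succ_lt hca
        exact ⟨Iic (mkb (c+1) (hsa.trans ha) z01), ⟨c+1, hsa, rfl⟩,
          (mkb_mono_ord (lt_add_one c)).le⟩
    exact hU.subset_closure hUsub hcl

end
end LLB
end
section
open Set TopologicalSpace
namespace LLB
noncomputable section

lemma countable_Iic_ord {a : Ordinal} (ha : a < om1) : (Iic a).Countable := by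
  have h1 : Iic a = Iio (a + 1) := by rw [Ordinal.add_one_eq_succ, Order.Iio_succ]
  rw [h1, Cardinal.countable_iff_lt_aleph_one, Ordinal.mk_Iio_ordinal]
  rw [Cardinal.lift_lt_aleph_one]
  exact Cardinal.lt_ord.1 (succ_lt_om1 ha)

/-- the countable "rational" set used for separability -/
def ESet (a : Ordinal) (ha : a < om1) : Set LongLinePlusBar :=
  ⋃ (q : ℚ), (fun c : ↥(Iic a) =>
    if h : 0 ≤ (q:ℝ) ∧ (q:ℝ) < 1 then
      mkb c.1 (lt_of_le_of_lt c.2 ha) ⟨(q:ℝ), h.1, h.2⟩ else bot') '' univ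

lemma countable_ESet (a : Ordinal) (ha : a < om1) : (ESet a ha).Countable := by
  have : Countable ↥(Iic a) := (countable_Iic_ord ha).to_subtype
  exact countable_iUnion fun q => countable_univ.image _

lemma mem_ESet {a : Ordinal} {ha : a < om1} {c : Ordinal} (hca : c ≤ a) (q : ℚ)
    (hq : 0 ≤ (q:ℝ) ∧ (q:ℝ) < 1) :
    mkb c (lt_of_le_of_lt hca ha) ⟨(q:ℝ), hq.1, hq.2⟩ ∈ ESet a ha := by
  refine mem_iUnion.2 ⟨q, ⟨⟨c, hca⟩, mem_univ _, ?_⟩⟩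
  simp only [dif_pos hq]

lemma separable_IicPt (a : Ordinal) (ha : a < om1) :
    IsSeparable (Iic (mkb a ha z01)) := by
  refine ⟨ESet a ha, countable_ESet a ha, ?_⟩
  intro z hz
  have hzt : z ≠ ⊤ := ne_top_of_le_ne_top mkb_ne_top hz
  rcases exists_eq_mkb hzt with ⟨c, hc, t, rfl⟩
  have hca : c ≤ a := by
    rcases mkb_le_mkb.1 hz with h' | ⟨h', _⟩
    · exact h'.le
    · exact h'.le
  by_cases hrat : ∃ q : ℚ, (q:ℝ) = (t:ℝ)
  · rcases hrat with ⟨q, hq⟩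
    refine subset_closure ?_
    have hq' : 0 ≤ (q:ℝ) ∧ (q:ℝ) < 1 := by rw [hq]; exact ⟨t.2.1, t.2.2⟩
    have : mkb c (lt_of_le_of_lt hca ha) ⟨(q:ℝ), hq'.1, hq'.2⟩ = mkb c hc t := by
      congr 1
      exact Subtype.ext hq
    rw [← this]
    exact mem_ESet hca q hq'
  · -- t irrational, in particular 0 < t and z is not minimal
    have ht0 : (0:ℝ) < (t:ℝ) := by
      rcases eq_or_lt_of_le t.2.1 with h | h
      · exact absurd ⟨0, by rw [Rat.cast_zero]; exact h⟩ hrat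
      · exact h
    have hbz : bot' < mkb c hc t := by
      rcases eq_or_lt_of_le (zero_le (a := c)) with h | h
      · exact mkb_lt_mkb.2 (Or.inr ⟨h, ht0⟩)
      · exact mkb_lt_mkb.2 (Or.inl h)
    refine mem_closure_of_between ⟨bot', hbz⟩ ⟨⊤, mkb_lt_top⟩ ?_
    intro l u hl hu
    rcases exists_eq_mkb (ne_top_of_lt hl) with ⟨d, hd, s, rfl⟩
    rcases mkb_lt_mkb.1 hl with h' | ⟨h', h''⟩
    · -- d < c : pick rational in (0, t)
      rcases exists_rat_btwn ht0 with ⟨q, hq0, hqt⟩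
      have hq : 0 ≤ (q:ℝ) ∧ (q:ℝ) < 1 := ⟨hq0.le, hqt.trans t.2.2⟩
      refine ⟨mkb c (lt_of_le_of_lt hca ha) ⟨(q:ℝ), hq.1, hq.2⟩, mem_ESet hca q hq, ?_, ?_⟩
      · exact mkb_lt_mkb.2 (Or.inl h')
      · exact lt_trans (mkb_lt_mkb.2 (Or.inr ⟨rfl, hqt⟩)) hu
    · -- same fiber: pick rational in (s, t)
      subst h'
      rcases exists_rat_btwn (show (s:ℝ) < (t:ℝ) from h'') with ⟨q, hq0, hqt⟩
      have hq : 0 ≤ (q:ℝ) ∧ (q:ℝ) < 1 := ⟨s.2.1.trans hq0.le, hqt.trans t.2.2⟩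
      refine ⟨mkb d (lt_of_le_of_lt hca ha) ⟨(q:ℝ), hq.1, hq.2⟩, mem_ESet hca q hq, ?_, ?_⟩
      · exact mkb_lt_mkb.2 (Or.inr ⟨rfl, hq0⟩)
      · exact lt_trans (mkb_lt_mkb.2 (Or.inr ⟨rfl, hqt⟩)) hu

lemma exists_connSep {u v : LongLinePlusBar} (hu : u ≠ ⊤) (hv : v ≠ ⊤) :
    ∃ s : Set LongLinePlusBar, IsPreconnected s ∧ IsSeparable s ∧ u ∈ s ∧ v ∈ s := by
  rcases exists_eq_mkb hu with ⟨a, ha, t1, rfl⟩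
  rcases exists_eq_mkb hv with ⟨b, hb, t2, rfl⟩
  have hm : max a b + 1 < om1 := succ_lt_om1 (max_lt ha hb)
  refine ⟨Iic (mkb (max a b + 1) hm z01), isPreconnected_IicPt _ hm, separable_IicPt _ hm, ?_, ?_⟩
  · exact mem_Iic.2 (mkb_le_mkb.2 (Or.inl (lt_of_le_of_lt (le_max_left a b) (lt_add_one _))))
  · exact mem_Iic.2 (mkb_le_mkb.2 (Or.inl (lt_of_le_of_lt (le_max_right a b) (lt_add_one _))))

end
end LLB
end
section
open Set TopologicalSpace
namespace LLB
noncomputable section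

lemma eq_top_of_mem_connSep {s : Set LongLinePlusBar} (hp : IsPreconnected s)
    (hsep : IsSeparable s) (ht : ⊤ ∈ s) {b} (hb : b ∈ s) : b = ⊤ := by
  by_contra hbt
  have h1 : Icc b ⊤ ⊆ s := hp.ordConnected.out hb ht
  exact not_separable_Icc hbt (hsep.mono h1)

lemma closure_ne_top : closure {z : LongLinePlusBar | z ≠ ⊤} = univ := by
  apply eq_univ_of_forall
  intro z
  rcases eq_or_ne z ⊤ with rfl | hz
  · refine top_mem_closure ?_
    intro l hl
    rcases exists_between_top hl with ⟨w, hw1, hw2⟩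
    exact ⟨w, hw2, hw1⟩
  · exact subset_closure hz

lemma isOpen_ne_top : IsOpen {z : LongLinePlusBar | z ≠ ⊤} := by
  have : {z : LongLinePlusBar | z ≠ ⊤} = Iio ⊤ := by ext z; exact (lt_top_iff_ne_top).symm
  rw [this]; exact isOpen_Iio

variable {n : ℕ}

def supp (x : Fin n → LongLinePlusBar) : Set (Fin n) := {j | x j = ⊤}

lemma suppRel_of_supp_eq {x y : Fin n → LongLinePlusBar} (h : supp x = supp y) :
    ∃ s : Set (Fin n → LongLinePlusBar), IsPreconnected s ∧ IsSeparable s ∧ x ∈ s ∧ y ∈ s := by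
  have hsets : ∀ j, ∃ s : Set LongLinePlusBar,
      IsPreconnected s ∧ IsSeparable s ∧ x j ∈ s ∧ y j ∈ s := by
    intro j
    by_cases hj : x j = ⊤
    · have hyj : y j = ⊤ := by
        have hmem : j ∈ supp x := hj
        rw [h] at hmem; exact hmem
      exact ⟨{⊤}, isPreconnected_singleton, (countable_singleton _).isSeparable,
        by simp [hj], by simp [hyj]⟩
    · have hyj : y j ≠ ⊤ := by
        intro hyj
        have hmem : j ∈ supp y := hyj
        rw [← h] at hmem; exact hj hmem
      exact exists_connSep hj hyj
  choose S h1 h2 h3 h4 using hsets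
  refine ⟨univ.pi S, isPreconnected_univ_pi h1, ?_, fun j _ => h3 j, fun j _ => h4 j⟩
  choose c hc hcc using h2
  refine ⟨univ.pi c, ?_, ?_⟩
  · have h5 : {f : Fin n → LongLinePlusBar | ∀ j, f j ∈ c j}.Countable := countable_pi hc
    convert h5 using 1
    ext f; simp [Set.mem_pi]
  · rw [closure_pi_set]
    exact fun f hf j hj => hcc j (hf j hj)

lemma supp_eq_of_suppRel {x y : Fin n → LongLinePlusBar}
    (h : ∃ s : Set (Fin n → LongLinePlusBar), IsPreconnected s ∧ IsSeparable s ∧ x ∈ s ∧ y ∈ s) :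
    supp x = supp y := by
  rcases h with ⟨s, hp, hsep, hx, hy⟩
  have key : ∀ (u v : Fin n → LongLinePlusBar), u ∈ s → v ∈ s → ∀ j, u j = ⊤ → v j = ⊤ := by
    intro u v hu hv j huj
    have hproj : IsPreconnected ((fun z : Fin n → LongLinePlusBar => z j) '' s) :=
      hp.image _ (continuous_apply j).continuousOn
    have hprojsep : IsSeparable ((fun z : Fin n → LongLinePlusBar => z j) '' s) :=
      hsep.image (continuous_apply j)
    exact eq_top_of_mem_connSep hproj hprojsep (huj ▸ mem_image_of_mem _ hu)
      (mem_image_of_mem _ hv)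
  ext j
  exact ⟨fun hj => key x y hx hy j hj, fun hj => key y x hy hx j hj⟩

end
end LLB
end

section
open Set TopologicalSpace
namespace LLB
noncomputable section

lemma bot'_ne_top : bot' ≠ ⊤ := mkb_ne_top

variable {n : ℕ}

lemma supp_image (h : (Fin n → LongLinePlusBar) ≃ₜ (Fin n → LongLinePlusBar))
    {x y : Fin n → LongLinePlusBar} (hxy : supp x = supp y) : supp (h x) = supp (h y) := by
  rcases suppRel_of_supp_eq hxy with ⟨s, hp, hsep, hx, hy⟩
  exact supp_eq_of_suppRel ⟨h '' s, hp.image _ h.continuous.continuousOn,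
    hsep.image h.continuous, mem_image_of_mem _ hx, mem_image_of_mem _ hy⟩

open Classical in
def xS (S : Set (Fin n)) : Fin n → LongLinePlusBar := fun j => if j ∈ S then ⊤ else bot'

lemma supp_xS (S : Set (Fin n)) : supp (xS S) = S := by
  ext j
  by_cases hj : j ∈ S <;> simp [supp, xS, hj, bot'_ne_top]

def hmap (h : (Fin n → LongLinePlusBar) ≃ₜ (Fin n → LongLinePlusBar)) (S : Set (Fin n)) :
    Set (Fin n) := supp (h (xS S))

lemma supp_h_eq (h : (Fin n → LongLinePlusBar) ≃ₜ (Fin n → LongLinePlusBar))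
    (x : Fin n → LongLinePlusBar) : supp (h x) = hmap h (supp x) :=
  supp_image h (supp_xS (supp x)).symm

lemma hmap_comp (f g : (Fin n → LongLinePlusBar) ≃ₜ (Fin n → LongLinePlusBar))
    (S : Set (Fin n)) : hmap (f.trans g) S = hmap g (hmap f S) := by
  show supp ((f.trans g) (xS S)) = _
  have h1 : (f.trans g) (xS S) = g (f (xS S)) := rfl
  rw [h1, supp_h_eq g (f (xS S))]
  rfl

lemma hmap_id (S : Set (Fin n)) :
    hmap (Homeomorph.refl (Fin n → LongLinePlusBar)) S = S := supp_xS S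

lemma hmap_inv (h : (Fin n → LongLinePlusBar) ≃ₜ (Fin n → LongLinePlusBar)) (S : Set (Fin n)) :
    hmap h.symm (hmap h S) = S := by
  rw [← hmap_comp h h.symm S, Homeomorph.self_trans_symm, hmap_id]

lemma hmap_inv' (h : (Fin n → LongLinePlusBar) ≃ₜ (Fin n → LongLinePlusBar)) (S : Set (Fin n)) :
    hmap h (hmap h.symm S) = S := by
  rw [← hmap_comp h.symm h S, Homeomorph.symm_trans_self, hmap_id]

open Classical in
lemma suppSet_eq_pi (S : Set (Fin n)) :
    {v : Fin n → LongLinePlusBar | supp v = S} =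
      univ.pi (fun j => if j ∈ S then {(⊤ : LongLinePlusBar)} else {z | z ≠ ⊤}) := by
  ext v
  simp only [mem_setOf_eq, mem_pi, mem_univ, true_implies]
  constructor
  · intro hv j
    by_cases hj : j ∈ S
    · rw [if_pos hj]
      have : j ∈ supp v := hv ▸ hj
      exact this
    · rw [if_neg hj]
      intro hc
      exact hj (hv ▸ (hc : j ∈ supp v))
  · intro hv
    ext j
    specialize hv j
    by_cases hj : j ∈ S
    · rw [if_pos hj] at hv
      exact ⟨fun _ => hj, fun _ => hv⟩
    · rw [if_neg hj] at hv
      exact ⟨fun hc => absurd hc hv, fun hc => absurd hc hj⟩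

lemma isClosed_top_singleton : IsClosed ({(⊤ : LongLinePlusBar)} : Set LongLinePlusBar) := by
  rw [← isOpen_compl_iff]
  have : ({(⊤ : LongLinePlusBar)} : Set LongLinePlusBar)ᶜ = {z | z ≠ ⊤} := by ext z; simp
  rw [this]; exact isOpen_ne_top

open Classical in
lemma closure_suppSet (S : Set (Fin n)) :
    closure {v : Fin n → LongLinePlusBar | supp v = S} = {v | S ⊆ supp v} := by
  rw [suppSet_eq_pi, closure_pi_set]
  ext v
  simp only [mem_pi, mem_univ, true_implies, mem_setOf_eq, Function.comp]
  constructor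
  · intro hv j hjS
    have h1 := hv j
    rw [if_pos hjS, isClosed_top_singleton.closure_eq] at h1
    exact h1
  · intro hv j
    by_cases hj : j ∈ S
    · rw [if_pos hj, isClosed_top_singleton.closure_eq]
      exact hv hj
    · rw [if_neg hj, closure_ne_top]
      exact mem_univ _

lemma supp_mono (h : (Fin n → LongLinePlusBar) ≃ₜ (Fin n → LongLinePlusBar))
    {z w : Fin n → LongLinePlusBar} (hzw : supp z ⊆ supp w) : supp (h z) ⊆ supp (h w) := by
  have h1 : w ∈ closure {v | supp v = supp z} := by rw [closure_suppSet]; exact hzw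
  have h2 : h w ∈ closure (h '' {v | supp v = supp z}) := by
    rw [← Homeomorph.image_closure]
    exact mem_image_of_mem _ h1
  have h3 : h '' {v | supp v = supp z} ⊆ {v | supp v = supp (h z)} := by
    rintro _ ⟨u, hu, rfl⟩
    exact supp_image h hu
  have h4 := closure_mono h3 h2
  rw [closure_suppSet] at h4
  exact h4

lemma hmap_mono (h : (Fin n → LongLinePlusBar) ≃ₜ (Fin n → LongLinePlusBar))
    {S T : Set (Fin n)} (hST : S ⊆ T) : hmap h S ⊆ hmap h T := by
  have h1 : supp (xS S) ⊆ supp (xS T) := by rw [supp_xS, supp_xS]; exact hST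
  exact supp_mono h h1

lemma hmap_empty (h : (Fin n → LongLinePlusBar) ≃ₜ (Fin n → LongLinePlusBar)) :
    hmap h (∅ : Set (Fin n)) = ∅ := by
  have h2 : hmap h (hmap h.symm ∅) = ∅ := hmap_inv' h ∅
  have h1 : hmap h ∅ ⊆ hmap h (hmap h.symm ∅) := hmap_mono h (empty_subset _)
  rw [h2] at h1
  exact subset_empty_iff.1 h1

lemma hmap_singleton (h : (Fin n → LongLinePlusBar) ≃ₜ (Fin n → LongLinePlusBar)) (i : Fin n) :
    ∃ a, hmap h {i} = {a} := by
  have hne : (hmap h {i}).Nonempty := by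
    rcases eq_empty_or_nonempty (hmap h {i}) with he | hne
    · exfalso
      have h1 := hmap_inv h {i}
      rw [he, hmap_empty] at h1
      exact (singleton_ne_empty i) h1.symm
    · exact hne
  rcases hne with ⟨a, ha⟩
  refine ⟨a, ?_⟩
  have hT1 : hmap h.symm {a} ⊆ {i} := by
    have h1 := hmap_mono h.symm (singleton_subset_iff.2 ha)
    rwa [hmap_inv h {i}] at h1
  have hT : hmap h.symm {a} = {i} := by
    rcases subset_singleton_iff_eq.1 hT1 with he | he
    · exfalso
      have h1 := hmap_inv' h {a}
      rw [he, hmap_empty] at h1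
      exact (singleton_ne_empty a) h1.symm
    · exact he
  rw [← hT, hmap_inv']

def phi (h : (Fin n → LongLinePlusBar) ≃ₜ (Fin n → LongLinePlusBar)) (i : Fin n) : Fin n :=
  (hmap_singleton h i).choose

lemma phi_spec (h : (Fin n → LongLinePlusBar) ≃ₜ (Fin n → LongLinePlusBar)) (i : Fin n) :
    hmap h {i} = {phi h i} := (hmap_singleton h i).choose_spec

lemma phi_comp (f g : (Fin n → LongLinePlusBar) ≃ₜ (Fin n → LongLinePlusBar)) (i : Fin n) :
    phi (f.trans g) i = phi g (phi f i) := by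
  have h1 : ({phi (f.trans g) i} : Set (Fin n)) = {phi g (phi f i)} := by
    rw [← phi_spec, hmap_comp, phi_spec f i, phi_spec g]
  exact singleton_eq_singleton_iff.1 h1

lemma phi_id (i : Fin n) : phi (Homeomorph.refl (Fin n → LongLinePlusBar)) i = i :=
  singleton_eq_singleton_iff.1 (by rw [← phi_spec, hmap_id])

def Phi (h : (Fin n → LongLinePlusBar) ≃ₜ (Fin n → LongLinePlusBar)) : Equiv.Perm (Fin n) where
  toFun := phi h
  invFun := phi h.symm
  left_inv i := by
    have h1 := phi_comp h h.symm i
    rw [Homeomorph.self_trans_symm, phi_id] at h1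
    exact h1.symm
  right_inv i := by
    have h1 := phi_comp h.symm h i
    rw [Homeomorph.symm_trans_self, phi_id] at h1
    exact h1.symm

def permHomeo (σ : Equiv.Perm (Fin n)) :
    (Fin n → LongLinePlusBar) ≃ₜ (Fin n → LongLinePlusBar) where
  toFun x := fun j => x (σ.symm j)
  invFun x := fun j => x (σ j)
  left_inv x := by ext j; simp
  right_inv x := by ext j; simp
  continuous_toFun := continuous_pi fun j => continuous_apply _
  continuous_invFun := continuous_pi fun j => continuous_apply _

lemma phi_permHomeo (σ : Equiv.Perm (Fin n)) (i : Fin n) : phi (permHomeo σ) i = σ i := by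
  apply singleton_eq_singleton_iff.1
  rw [← phi_spec]
  show supp ((permHomeo σ) (xS {i})) = {σ i}
  ext j
  simp only [supp, mem_setOf_eq, mem_singleton_iff]
  show xS {i} (σ.symm j) = ⊤ ↔ j = σ i
  constructor
  · intro hj
    by_cases hmem : σ.symm j ∈ ({i} : Set (Fin n))
    · have h1 : σ.symm j = i := hmem
      rw [← h1, Equiv.apply_symm_apply]
    · exfalso
      rw [xS, if_neg hmem] at hj
      exact bot'_ne_top hj
  · intro hj
    subst hj
    have h1 : σ.symm (σ i) ∈ ({i} : Set (Fin n)) := by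
      rw [Equiv.symm_apply_apply]; exact rfl
    rw [xS, if_pos h1]

end
end LLB
end


/-- There is a surjective homomorphism `Φ : Homeo(L̄₊ⁿ) → Sₙ`, given by the action of a
homeomorphism on the `n` path components of `L̄₊ⁿ` whose label has exactly one coordinate
equal to `Ω`, and it splits via the coordinate-permutation homeomorphisms. -/
theorem longLinePlusBar_pow_homeo_to_symm (n : ℕ) :
    ∃ Φ : ((Fin n → LongLinePlusBar) ≃ₜ (Fin n → LongLinePlusBar)) → Equiv.Perm (Fin n),
      (∀ f g, Φ (f.trans g) = (Φ f).trans (Φ g)) ∧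
      (∀ h : (Fin n → LongLinePlusBar) ≃ₜ (Fin n → LongLinePlusBar),
        ∀ (i : Fin n) (x : Fin n → LongLinePlusBar),
          (∀ j, x j = ⊤ ↔ j = i) → ∀ j, (h x j = ⊤ ↔ j = Φ h i)) ∧
      Function.Surjective Φ ∧
      ∃ s : Equiv.Perm (Fin n) → ((Fin n → LongLinePlusBar) ≃ₜ (Fin n → LongLinePlusBar)),
        (∀ σ x i, s σ x (σ i) = x i) ∧ ∀ σ, Φ (s σ) = σ := by
  classical
  have hsplit : ∀ σ : Equiv.Perm (Fin n), LLB.Phi (LLB.permHomeo σ) = σ := by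
    intro σ
    exact Equiv.ext fun i => LLB.phi_permHomeo σ i
  refine ⟨LLB.Phi, ?_, ?_, ?_, ?_⟩
  · intro f g
    exact Equiv.ext fun i => LLB.phi_comp f g i
  · intro h i x hx
    have hsupp : LLB.supp x = {i} := by
      ext j
      exact (hx j).trans Set.mem_singleton_iff.symm
    have hs2 : LLB.supp (h x) = {LLB.phi h i} := by
      rw [LLB.supp_h_eq h x, hsupp]
      exact LLB.phi_spec h i
    intro j
    have hmem : (h x j = ⊤) ↔ j ∈ LLB.supp (h x) := Iff.rfl
    rw [hmem, hs2, Set.mem_singleton_iff]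
    exact Iff.rfl
  · intro σ
    exact ⟨LLB.permHomeo σ, hsplit σ⟩
  · refine ⟨LLB.permHomeo, ?_, hsplit⟩
    intro σ x i
    show x (σ.symm (σ i)) = x i
    rw [Equiv.symm_apply_apply]
end

section
/- Any homeomorphism h of L̄ⁿ maps the finite set W = {-Ω, Ω}ⁿ onto itself, and the induced permutation of W preserves the graph structure in which p, q ∈ W are adjacent iff they differ in exactly one coordinate; i.e., h induces an automorphism of the n-dimensional hypercube graph. -/
/-- The strictly positive part of `L₊` (elements other than the minimum `0`). -/
def LongLinePlusPos : Type 1 := {x : LongLinePlus // ∃ y, y < x}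

noncomputable instance : LinearOrder LongLinePlusPos :=
  inferInstanceAs (LinearOrder {x : LongLinePlus // ∃ y, y < x})

/-- The long line `L`: a reversed copy of `L₊ \ {0}` followed by `L₊`,
i.e. two copies of `L₊` glued at `0` with the first copy order-reversed. -/
def LongLine : Type 1 := (LongLinePlusPos)ᵒᵈ ⊕ₗ LongLinePlus

noncomputable instance : LinearOrder LongLine :=
  inferInstanceAs (LinearOrder ((LongLinePlusPos)ᵒᵈ ⊕ₗ LongLinePlus))

noncomputable instance : TopologicalSpace LongLine := Preorder.topology LongLine
instance : OrderTopology LongLine := ⟨rfl⟩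

/-- The extended long line `L̄ = {-Ω} ∪ L ∪ {Ω}`, obtained by adjoining a bottom element
`-Ω` and a top element `Ω` to `L`, with the order topology. -/
def LongLineBar : Type 1 := WithBot (WithTop LongLine)

noncomputable instance : LinearOrder LongLineBar :=
  inferInstanceAs (LinearOrder (WithBot (WithTop LongLine)))

noncomputable instance : OrderTop LongLineBar := inferInstanceAs (OrderTop (WithBot (WithTop LongLine)))
instance : OrderBot LongLineBar := inferInstanceAs (OrderBot (WithBot (WithTop LongLine)))

noncomputable instance : TopologicalSpace LongLineBar := Preorder.topology LongLineBar
instance : OrderTopology LongLineBar := ⟨rfl⟩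

/-- The inclusion `L ↪ L̄`. -/
def LongLine.toBar (x : LongLine) : LongLineBar := WithBot.some (WithTop.some x)


open Set

def SOmega.val (a : SOmega) : Ordinal := Subtype.val (show Set.Iio (Cardinal.aleph 1).ord from a)
def SOmega.mk (o : Ordinal) (h : o < (Cardinal.aleph 1).ord) : SOmega := show Set.Iio _ from ⟨o, h⟩

lemma SOmega.lt_omega1 (a : SOmega) : a.val < (Cardinal.aleph 1).ord :=
  (show Set.Iio (Cardinal.aleph 1).ord from a).2

lemma SOmega.le_iff {a b : SOmega} : a ≤ b ↔ a.val ≤ b.val := Iff.rfl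
lemma SOmega.lt_iff {a b : SOmega} : a < b ↔ a.val < b.val := Iff.rfl
lemma SOmega.ext {a b : SOmega} (h : a.val = b.val) : a = b := Subtype.ext h

-- succ
lemma omega1_isLimit : Order.IsSuccLimit (Cardinal.aleph 1).ord :=
  Cardinal.isSuccLimit_ord (Cardinal.aleph0_le_aleph 1)

def SOmega.succ (a : SOmega) : SOmega := SOmega.mk (a.val + 1) (omega1_isLimit.succ_lt a.lt_omega1)
lemma SOmega.lt_succ (a : SOmega) : a < a.succ := Order.lt_succ_of_le (le_refl a.val)

abbrev Ico01 : Type := Set.Ico (0:ℝ) 1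

def LP.mk (a : SOmega) (t : Ico01) : LongLinePlus := show SOmega ×ₗ Ico01 from toLex (a, t)
def LP.fst (x : LongLinePlus) : SOmega := (ofLex (show SOmega ×ₗ Ico01 from x)).1
def LP.snd (x : LongLinePlus) : Ico01 := (ofLex (show SOmega ×ₗ Ico01 from x)).2

lemma LP.mk_fst (a : SOmega) (t : Ico01) : (LP.mk a t).fst = a := rfl
lemma LP.mk_snd (a : SOmega) (t : Ico01) : (LP.mk a t).snd = t := rfl
lemma LP.eta (x : LongLinePlus) : LP.mk x.fst x.snd = x := rfl

lemma LP.lt_iff {x y : LongLinePlus} :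
    x < y ↔ x.fst < y.fst ∨ (x.fst = y.fst ∧ x.snd < y.snd) := Prod.Lex.lt_iff

lemma LP.le_iff {x y : LongLinePlus} :
    x ≤ y ↔ x.fst < y.fst ∨ (x.fst = y.fst ∧ x.snd ≤ y.snd) := Prod.Lex.le_iff

lemma LP.ext {x y : LongLinePlus} (h1 : x.fst = y.fst) (h2 : x.snd = y.snd) : x = y := by
  rw [← LP.eta x, ← LP.eta y, h1, h2]

lemma LP.fst_mono {x y : LongLinePlus} (h : x ≤ y) : x.fst ≤ y.fst := by
  rcases LP.le_iff.1 h with h | ⟨h, _⟩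
  · exact le_of_lt h
  · exact le_of_eq h

-- Ico01 lemmas
lemma Ico01.le_iff {s t : Ico01} : s ≤ t ↔ s.1 ≤ t.1 := Iff.rfl
lemma Ico01.lt_iff {s t : Ico01} : s < t ↔ s.1 < t.1 := Iff.rfl
def Ico01.of (r : ℝ) (h0 : 0 ≤ r) (h1 : r < 1) : Ico01 := ⟨r, h0, h1⟩

-- LUB existence in SOmega
lemma SOm_exists_isLUB {S : Set SOmega} (hne : S.Nonempty) (hbdd : BddAbove S) :
    ∃ x, IsLUB S x := by
  obtain ⟨b, hb⟩ := hbdd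
  set A : Set Ordinal := SOmega.val '' S with hA
  have hAne : A.Nonempty := hne.image _
  have hbA : b.val ∈ upperBounds A := by
    rintro _ ⟨a, ha, rfl⟩; exact SOmega.le_iff.1 (hb ha)
  have hlub : IsLUB A (sSup A) := isLUB_csSup hAne ⟨b.val, hbA⟩
  have hlt : sSup A < (Cardinal.aleph 1).ord := lt_of_le_of_lt (hlub.2 hbA) b.lt_omega1
  refine ⟨SOmega.mk (sSup A) hlt, ⟨fun a ha => ?_, fun u hu => ?_⟩⟩
  · exact SOmega.le_iff.2 (hlub.1 ⟨a, ha, rfl⟩)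
  · exact SOmega.le_iff.2 (hlub.2 (by rintro _ ⟨a, ha, rfl⟩; exact SOmega.le_iff.1 (hu ha)))

-- LUB existence in LongLinePlus
lemma LP_exists_isLUB {S : Set LongLinePlus} (hne : S.Nonempty) (hbdd : BddAbove S) :
    ∃ x, IsLUB S x := by
  obtain ⟨b, hb⟩ := hbdd
  set A : Set SOmega := LP.fst '' S with hA
  have hAne : A.Nonempty := hne.image _
  obtain ⟨α, hα⟩ := SOm_exists_isLUB hAne ⟨b.fst, by rintro _ ⟨x, hx, rfl⟩; exact LP.fst_mono (hb hx)⟩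
  set T : Set Ico01 := {t | LP.mk α t ∈ S} with hT
  set R : Set ℝ := Subtype.val '' T with hR
  have hRbdd : BddAbove R := ⟨1, by rintro _ ⟨t, _, rfl⟩; exact le_of_lt t.2.2⟩
  have hR0 : ∀ r ∈ R, 0 ≤ r := by rintro _ ⟨t, _, rfl⟩; exact t.2.1
  set r : ℝ := sSup R with hr
  have hfstle : ∀ x ∈ S, x.fst ≤ α := fun x hx => hα.1 ⟨x, hx, rfl⟩
  have hub_fst : ∀ u ∈ upperBounds S, α ≤ u.fst := by
    intro u hu
    exact hα.2 (by rintro _ ⟨x, hx, rfl⟩; exact LP.fst_mono (hu hx))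
  by_cases hr1 : r < 1
  · have hr0 : 0 ≤ r := by
      rcases T.eq_empty_or_nonempty with hTe | hTne
      · simp [hr, hR, hTe, Real.sSup_empty]
      · obtain ⟨t, ht⟩ := hTne
        exact le_trans t.2.1 (le_csSup hRbdd ⟨t, ht, rfl⟩)
    refine ⟨LP.mk α (Ico01.of r hr0 hr1), ⟨fun x hx => ?_, fun u hu => ?_⟩⟩
    · rcases lt_or_eq_of_le (hfstle x hx) with h | h
      · exact le_of_lt (LP.lt_iff.2 (Or.inl h))
      · refine LP.le_iff.2 (Or.inr ⟨h, ?_⟩)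
        have : x.snd ∈ T := by rwa [hT, Set.mem_setOf_eq, ← h, LP.eta]
        exact le_csSup hRbdd ⟨x.snd, this, rfl⟩
    · rcases lt_or_eq_of_le (hub_fst u hu) with h | h
      · exact le_of_lt (LP.lt_iff.2 (Or.inl h))
      · refine LP.le_iff.2 (Or.inr ⟨h, ?_⟩)
        rcases T.eq_empty_or_nonempty with hTe | hTne
        · have : r = 0 := by simp [hr, hR, hTe, Real.sSup_empty]
          show r ≤ (u.snd : ℝ)
          rw [this]; exact u.snd.2.1
        · show r ≤ (u.snd : ℝ)
          refine csSup_le (hTne.image _) ?_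
          rintro _ ⟨t, ht, rfl⟩
          have hle : LP.mk α t ≤ u := hu ht
          rcases LP.le_iff.1 hle with hlt | ⟨_, hsnd⟩
          · rw [LP.mk_fst, h] at hlt; exact absurd hlt (lt_irrefl _)
          · exact hsnd
  · have hTne : T.Nonempty := by
      by_contra hTe
      rw [Set.not_nonempty_iff_eq_empty] at hTe
      have : r = 0 := by simp [hr, hR, hTe, Real.sSup_empty]
      exact hr1 (by rw [this]; norm_num)
    refine ⟨LP.mk α.succ ⟨0, le_refl 0, by norm_num⟩, ⟨fun x hx => ?_, fun u hu => ?_⟩⟩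
    · exact le_of_lt (LP.lt_iff.2 (Or.inl (lt_of_le_of_lt (hfstle x hx) α.lt_succ)))
    · rcases lt_or_eq_of_le (hub_fst u hu) with h | h
      · have hsucc : α.succ ≤ u.fst := by
          refine SOmega.le_iff.2 ?_
          show α.val + 1 ≤ u.fst.val
          rw [Ordinal.add_one_eq_succ]
          exact Order.succ_le_of_lt (SOmega.lt_iff.1 h)
        rcases lt_or_eq_of_le hsucc with h2 | h2
        · exact le_of_lt (LP.lt_iff.2 (Or.inl h2))
        · exact LP.le_iff.2 (Or.inr ⟨h2, u.snd.2.1⟩)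
      · exfalso
        have : r ≤ (u.snd : ℝ) := by
          refine csSup_le (hTne.image _) ?_
          rintro _ ⟨t, ht, rfl⟩
          have hle : LP.mk α t ≤ u := hu ht
          rcases LP.le_iff.1 hle with hlt | ⟨_, hsnd⟩
          · rw [LP.mk_fst, h] at hlt; exact absurd hlt (lt_irrefl _)
          · exact hsnd
        exact hr1 (lt_of_le_of_lt this u.snd.2.2)

-- GLB existence in LongLinePlus (every nonempty set)
lemma LP_exists_isGLB {S : Set LongLinePlus} (hne : S.Nonempty) : ∃ x, IsGLB S x := by
  set A : Set Ordinal := (fun x => (LP.fst x).val) '' S with hA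
  have hAne : A.Nonempty := hne.image _
  set αo : Ordinal := WellFounded.min Ordinal.lt_wf A hAne with hαo
  have hmem : αo ∈ A := WellFounded.min_mem _ _ _
  have hlt1 : αo < (Cardinal.aleph 1).ord := by
    obtain ⟨x, _, hx⟩ := hmem
    rw [← hx]; exact (LP.fst x).lt_omega1
  set α : SOmega := SOmega.mk αo hlt1 with hα
  have hmin : ∀ x ∈ S, α ≤ x.fst := by
    intro x hx
    exact not_lt.1 (fun h => WellFounded.not_lt_min Ordinal.lt_wf A ⟨x, hx, rfl⟩ (SOmega.lt_iff.1 h))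
  obtain ⟨x₀, hx₀S, hx₀⟩ := hmem
  have hx₀fst : x₀.fst = α := SOmega.ext hx₀
  set T : Set Ico01 := {t | LP.mk α t ∈ S} with hT
  have hTne : T.Nonempty := ⟨x₀.snd, by show LP.mk α x₀.snd ∈ S; rw [← hx₀fst, LP.eta]; exact hx₀S⟩
  set R : Set ℝ := Subtype.val '' T with hR
  have hRne : R.Nonempty := hTne.image _
  have hRbdd : BddBelow R := ⟨0, by rintro _ ⟨t, _, rfl⟩; exact t.2.1⟩
  set ρ : ℝ := sInf R with hρ
  have hρ0 : 0 ≤ ρ := le_csInf hRne (by rintro _ ⟨t, _, rfl⟩; exact t.2.1)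
  have hρ1 : ρ < 1 := by
    obtain ⟨t, ht⟩ := hTne
    exact lt_of_le_of_lt (csInf_le hRbdd ⟨t, ht, rfl⟩) t.2.2
  refine ⟨LP.mk α (Ico01.of ρ hρ0 hρ1), ⟨fun x hx => ?_, fun u hu => ?_⟩⟩
  · rcases lt_or_eq_of_le (hmin x hx) with h | h
    · exact le_of_lt (LP.lt_iff.2 (Or.inl h))
    · refine LP.le_iff.2 (Or.inr ⟨h.symm ▸ rfl, ?_⟩)
      have : x.snd ∈ T := by rwa [hT, Set.mem_setOf_eq, h, LP.eta]
      exact csInf_le hRbdd ⟨x.snd, this, rfl⟩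
  · have hufst : u.fst ≤ α := by
      have := hu hx₀S
      rw [← hx₀fst]; exact LP.fst_mono this
    rcases lt_or_eq_of_le hufst with h | h
    · exact le_of_lt (LP.lt_iff.2 (Or.inl h))
    · refine LP.le_iff.2 (Or.inr ⟨h, ?_⟩)
      show (u.snd : ℝ) ≤ ρ
      refine le_csInf hRne ?_
      rintro _ ⟨t, ht, rfl⟩
      have hle : u ≤ LP.mk α t := hu ht
      rcases LP.le_iff.1 hle with hlt | ⟨_, hsnd⟩
      · rw [LP.mk_fst, ← h] at hlt; exact absurd hlt (lt_irrefl _)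
      · exact hsnd

-- ### LongLine layer
def LLPP.val (p : LongLinePlusPos) : LongLinePlus :=
  (show {x : LongLinePlus // ∃ y, y < x} from p).1
def LLPP.mk (x : LongLinePlus) (h : ∃ y, y < x) : LongLinePlusPos :=
  show {x : LongLinePlus // ∃ y, y < x} from ⟨x, h⟩
lemma LLPP.pos (p : LongLinePlusPos) : ∃ y, y < p.val :=
  (show {x : LongLinePlus // ∃ y, y < x} from p).2
lemma LLPP.le_iff {p q : LongLinePlusPos} : p ≤ q ↔ p.val ≤ q.val := Iff.rfl
lemma LLPP.lt_iff {p q : LongLinePlusPos} : p < q ↔ p.val < q.val := Iff.rfl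
lemma LLPP.ext {p q : LongLinePlusPos} (h : p.val = q.val) : p = q := Subtype.ext h
lemma LLPP.mk_val (x h) : (LLPP.mk x h).val = x := rfl

def LL.inl (p : LongLinePlusPos) : LongLine :=
  show (LongLinePlusPos)ᵒᵈ ⊕ₗ LongLinePlus from toLex (Sum.inl (OrderDual.toDual p))
def LL.inr (q : LongLinePlus) : LongLine :=
  show (LongLinePlusPos)ᵒᵈ ⊕ₗ LongLinePlus from toLex (Sum.inr q)

lemma LL.cases (x : LongLine) : (∃ p, x = LL.inl p) ∨ (∃ q, x = LL.inr q) := by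
  rcases h : ofLex (show (LongLinePlusPos)ᵒᵈ ⊕ₗ LongLinePlus from x) with p | q
  · exact Or.inl ⟨OrderDual.ofDual p, congrArg toLex h⟩
  · exact Or.inr ⟨q, congrArg toLex h⟩

lemma LL.inl_le_inl {p q : LongLinePlusPos} : LL.inl p ≤ LL.inl q ↔ q ≤ p :=
  Sum.Lex.inl_le_inl_iff
lemma LL.inl_lt_inl {p q : LongLinePlusPos} : LL.inl p < LL.inl q ↔ q < p :=
  Sum.Lex.inl_lt_inl_iff
lemma LL.inr_le_inr {p q : LongLinePlus} : LL.inr p ≤ LL.inr q ↔ p ≤ q :=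
  Sum.Lex.inr_le_inr_iff
lemma LL.inr_lt_inr {p q : LongLinePlus} : LL.inr p < LL.inr q ↔ p < q :=
  Sum.Lex.inr_lt_inr_iff
lemma LL.inl_lt_inr (p : LongLinePlusPos) (q : LongLinePlus) : LL.inl p < LL.inr q :=
  Sum.Lex.inl_lt_inr _ _
lemma LL.inl_le_inr (p : LongLinePlusPos) (q : LongLinePlus) : LL.inl p ≤ LL.inr q :=
  Sum.Lex.inl_le_inr _ _
lemma LL.not_inr_le_inl {p : LongLinePlusPos} {q : LongLinePlus} : ¬ LL.inr q ≤ LL.inl p :=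
  Sum.Lex.not_inr_le_inl

-- the zero of LongLinePlus
lemma zero_lt_omega1 : (0 : Ordinal) < (Cardinal.aleph 1).ord := omega1_isLimit.pos

def LLP0 : LongLinePlus := LP.mk (SOmega.mk 0 zero_lt_omega1) ⟨0, le_refl 0, by norm_num⟩

lemma LLP0_le (x : LongLinePlus) : LLP0 ≤ x := by
  rcases lt_trichotomy LLP0.fst x.fst with h | h | h
  · exact le_of_lt (LP.lt_iff.2 (Or.inl h))
  · exact LP.le_iff.2 (Or.inr ⟨h, x.snd.2.1⟩)
  · exact absurd (SOmega.lt_iff.1 h) (not_lt.2 (zero_le (a := x.fst.val)))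

lemma LL_exists_isLUB {S : Set LongLine} (hne : S.Nonempty) (hbdd : BddAbove S) :
    ∃ x, IsLUB S x := by
  obtain ⟨b, hb⟩ := hbdd
  set SQ : Set LongLinePlus := {q | LL.inr q ∈ S} with hSQ
  rcases SQ.eq_empty_or_nonempty with hQe | hQne
  · -- all elements are inl
    set SP : Set LongLinePlusPos := {p | LL.inl p ∈ S} with hSP
    have hmemP : ∀ x ∈ S, ∃ p, p ∈ SP ∧ x = LL.inl p := by
      intro x hx
      rcases LL.cases x with ⟨p, rfl⟩ | ⟨q, rfl⟩
      · exact ⟨p, hx, rfl⟩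
      · exact absurd (show q ∈ SQ from hx) (by simp [hQe])
    obtain ⟨x₀, hx₀⟩ := hne
    obtain ⟨p₀, hp₀, _⟩ := hmemP x₀ hx₀
    have hPne : (LLPP.val '' SP).Nonempty := ⟨p₀.val, p₀, hp₀, rfl⟩
    obtain ⟨g, hg⟩ := LP_exists_isGLB hPne
    by_cases hpos : ∃ y, y < g
    · refine ⟨LL.inl (LLPP.mk g hpos), ⟨fun x hx => ?_, fun u hu => ?_⟩⟩
      · obtain ⟨p, hp, rfl⟩ := hmemP x hx
        exact LL.inl_le_inl.2 (LLPP.le_iff.2 (hg.1 ⟨p, hp, rfl⟩))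
      · rcases LL.cases u with ⟨p', rfl⟩ | ⟨q', rfl⟩
        · refine LL.inl_le_inl.2 (LLPP.le_iff.2 ?_)
          refine hg.2 ?_
          rintro _ ⟨p, hp, rfl⟩
          exact LLPP.le_iff.1 (LL.inl_le_inl.1 (hu hp))
        · exact LL.inl_le_inr _ _
    · refine ⟨LL.inr LLP0, ⟨fun x hx => ?_, fun u hu => ?_⟩⟩
      · obtain ⟨p, hp, rfl⟩ := hmemP x hx
        exact LL.inl_le_inr _ _
      · rcases LL.cases u with ⟨p', rfl⟩ | ⟨q', rfl⟩
        · exfalso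
          have hlb : p'.val ∈ lowerBounds (LLPP.val '' SP) := by
            rintro _ ⟨p, hp, rfl⟩
            exact LLPP.le_iff.1 (LL.inl_le_inl.1 (hu hp))
          obtain ⟨y, hy⟩ := LLPP.pos p'
          exact hpos ⟨y, lt_of_lt_of_le hy (hg.2 hlb)⟩
        · exact LL.inr_le_inr.2 (LLP0_le _)
  · -- some element is inr
    have hbq : ∃ qb, b = LL.inr qb := by
      rcases LL.cases b with ⟨p, rfl⟩ | ⟨q, rfl⟩
      · obtain ⟨q, hq⟩ := hQne
        exact absurd (hb hq) LL.not_inr_le_inl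
      · exact ⟨q, rfl⟩
    obtain ⟨qb, rfl⟩ := hbq
    obtain ⟨m, hm⟩ := LP_exists_isLUB hQne ⟨qb, fun q hq => LL.inr_le_inr.1 (hb hq)⟩
    refine ⟨LL.inr m, ⟨fun x hx => ?_, fun u hu => ?_⟩⟩
    · rcases LL.cases x with ⟨p, rfl⟩ | ⟨q, rfl⟩
      · exact LL.inl_le_inr _ _
      · exact LL.inr_le_inr.2 (hm.1 hx)
    · rcases LL.cases u with ⟨p', rfl⟩ | ⟨q', rfl⟩
      · obtain ⟨q, hq⟩ := hQne
        exact absurd (hu hq) LL.not_inr_le_inl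
      · exact LL.inr_le_inr.2 (hm.2 (fun q hq => LL.inr_le_inr.1 (hu hq)))

-- ### LongLineBar layer
lemma toBar_le_toBar {x y : LongLine} : x.toBar ≤ y.toBar ↔ x ≤ y := by
  rw [LongLine.toBar, LongLine.toBar]
  exact WithBot.coe_le_coe.trans WithTop.coe_le_coe

lemma toBar_lt_toBar {x y : LongLine} : x.toBar < y.toBar ↔ x < y := by
  rw [LongLine.toBar, LongLine.toBar]
  exact WithBot.coe_lt_coe.trans WithTop.coe_lt_coe

lemma bot_lt_toBar (x : LongLine) : (⊥ : LongLineBar) < x.toBar :=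
  WithBot.bot_lt_coe _

lemma toBar_lt_top (x : LongLine) : x.toBar < (⊤ : LongLineBar) :=
  lt_of_lt_of_le (WithBot.coe_lt_coe.2 (WithTop.coe_lt_top x)) le_top

lemma LLB_bot_lt_top : (⊥ : LongLineBar) < ⊤ :=
  lt_trans (bot_lt_toBar (LL.inr LLP0)) (toBar_lt_top _)

lemma LLB_cases (w : LongLineBar) : w = ⊥ ∨ w = ⊤ ∨ ∃ x : LongLine, w = x.toBar := by
  have h : ∀ o : WithBot (WithTop LongLine),
      o = ⊥ ∨ o = ⊤ ∨ ∃ x : LongLine, o = WithBot.some (WithTop.some x) := by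
    intro o
    rcases o with _ | (_ | x)
    · exact Or.inl rfl
    · exact Or.inr (Or.inl rfl)
    · exact Or.inr (Or.inr ⟨x, rfl⟩)
  exact h w

lemma not_top_le_toBar (x : LongLine) : ¬ (⊤ : LongLineBar) ≤ x.toBar :=
  fun h => absurd (lt_of_lt_of_le (toBar_lt_top x) h) (lt_irrefl _)

lemma not_toBar_le_bot (x : LongLine) : ¬ x.toBar ≤ (⊥ : LongLineBar) :=
  fun h => absurd (lt_of_lt_of_le (bot_lt_toBar x) h) (lt_irrefl _)

lemma LLB_exists_isLUB (S : Set LongLineBar) : ∃ x, IsLUB S x := by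
  by_cases htop : ⊤ ∈ S
  · exact ⟨⊤, ⟨fun x _ => le_top, fun u hu => hu htop⟩⟩
  set S' : Set LongLine := {x | x.toBar ∈ S} with hS'
  by_cases hS'ne : S'.Nonempty
  · by_cases hbdd : BddAbove S'
    · obtain ⟨m, hm⟩ := LL_exists_isLUB hS'ne hbdd
      refine ⟨m.toBar, ⟨fun w hw => ?_, fun u hu => ?_⟩⟩
      · rcases LLB_cases w with rfl | rfl | ⟨x, rfl⟩
        · exact bot_le
        · exact absurd hw htop
        · exact toBar_le_toBar.2 (hm.1 hw)
      · rcases LLB_cases u with rfl | rfl | ⟨y, rfl⟩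
        · obtain ⟨x₀, hx₀⟩ := hS'ne
          exact absurd (hu hx₀) (not_toBar_le_bot x₀)
        · exact le_top
        · exact toBar_le_toBar.2 (hm.2 (fun x hx => toBar_le_toBar.1 (hu hx)))
    · refine ⟨⊤, ⟨fun x _ => le_top, fun u hu => ?_⟩⟩
      rcases LLB_cases u with rfl | rfl | ⟨y, rfl⟩
      · obtain ⟨x₀, hx₀⟩ := hS'ne
        exact absurd (hu hx₀) (not_toBar_le_bot x₀)
      · exact le_refl _
      · exact absurd ⟨y, fun x hx => toBar_le_toBar.1 (hu hx)⟩ hbdd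
  · refine ⟨⊥, ⟨fun w hw => ?_, fun u _ => bot_le⟩⟩
    rcases LLB_cases w with rfl | rfl | ⟨x, rfl⟩
    · exact le_refl _
    · exact absurd hw htop
    · exact absurd (show x ∈ S' from hw) (fun h => hS'ne ⟨x, h⟩)

noncomputable instance : SupSet LongLineBar := ⟨fun S => (LLB_exists_isLUB S).choose⟩

lemma LLB_isLUB_sSup (S : Set LongLineBar) : IsLUB S (sSup S) := (LLB_exists_isLUB S).choose_spec

noncomputable instance : ConditionallyCompleteLinearOrder LongLineBar :=
  { conditionallyCompleteLatticeOfLatticeOfsSup LongLineBar (fun S _ _ => LLB_isLUB_sSup S),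
    (inferInstance : LinearOrder LongLineBar) with
    csSup_of_not_bddAbove := fun s H => (H (OrderTop.bddAbove s)).elim
    csInf_of_not_bddBelow := fun s H => (H (OrderBot.bddBelow s)).elim }

-- ### rational points and density
def ratIco : Set Ico01 := {t | ∃ q : ℚ, (t : ℝ) = q}
def ratLP : Set LongLinePlus := {x | x.snd ∈ ratIco}
def barR (q : LongLinePlus) : LongLineBar := (LL.inr q).toBar
def barL (p : LongLinePlusPos) : LongLineBar := (LL.inl p).toBar
def ratBar : Set LongLineBar := (barR '' ratLP) ∪ (barL '' {p | p.val ∈ ratLP})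

lemma barR_lt_barR {q q' : LongLinePlus} : barR q < barR q' ↔ q < q' := by
  rw [barR, barR]; exact toBar_lt_toBar.trans LL.inr_lt_inr
lemma barL_lt_barL {p p' : LongLinePlusPos} : barL p < barL p' ↔ p' < p := by
  rw [barL, barL]; exact toBar_lt_toBar.trans LL.inl_lt_inl
lemma barL_lt_barR (p : LongLinePlusPos) (q : LongLinePlus) : barL p < barR q :=
  toBar_lt_toBar.2 (LL.inl_lt_inr _ _)
lemma not_barR_le_barL {p : LongLinePlusPos} {q : LongLinePlus} : ¬ barR q ≤ barL p :=
  fun h => LL.not_inr_le_inl (toBar_le_toBar.1 h)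

-- rational density inside L₊
lemma LP_rat_btwn {x y : LongLinePlus} (h : x < y) : ∃ z ∈ ratLP, x < z ∧ z < y := by
  rcases LP.lt_iff.1 h with hf | ⟨hf, hs⟩
  · obtain ⟨q, hq1, hq2⟩ := exists_rat_btwn x.snd.2.2
    have h0 : (0:ℝ) ≤ (q:ℝ) := le_trans x.snd.2.1 (le_of_lt hq1)
    refine ⟨LP.mk x.fst (Ico01.of q h0 hq2), ⟨q, rfl⟩, ?_, ?_⟩
    · exact LP.lt_iff.2 (Or.inr ⟨rfl, hq1⟩)
    · exact LP.lt_iff.2 (Or.inl hf)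
  · obtain ⟨q, hq1, hq2⟩ := exists_rat_btwn (Ico01.lt_iff.1 hs)
    have h0 : (0:ℝ) ≤ (q:ℝ) := le_trans x.snd.2.1 (le_of_lt hq1)
    have h1 : (q:ℝ) < 1 := lt_trans hq2 y.snd.2.2
    refine ⟨LP.mk x.fst (Ico01.of q h0 h1), ⟨q, rfl⟩, ?_, ?_⟩
    · exact LP.lt_iff.2 (Or.inr ⟨rfl, hq1⟩)
    · exact LP.lt_iff.2 (Or.inr ⟨hf, hq2⟩)

lemma LP_rat_above (x : LongLinePlus) : ∃ z ∈ ratLP, x < z := by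
  refine ⟨LP.mk x.fst.succ ⟨0, le_refl 0, by norm_num⟩, ⟨0, by simp [LP.mk_snd]⟩, ?_⟩
  exact LP.lt_iff.2 (Or.inl x.fst.lt_succ)

lemma LLP0_lt_pos (p : LongLinePlusPos) : LLP0 < p.val := by
  obtain ⟨y, hy⟩ := LLPP.pos p
  exact lt_of_le_of_lt (LLP0_le y) hy

-- master density lemma
lemma LLB_rat_btwn {u v : LongLineBar} (h : u < v) : ∃ w ∈ ratBar, u < w ∧ w < v := by
  have mkpos : ∀ {z x : LongLinePlus}, x < z → ∃ y, y < z := fun {z x} hx => ⟨x, hx⟩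
  rcases LLB_cases u with rfl | rfl | ⟨x, rfl⟩
  · -- u = ⊥
    rcases LLB_cases v with rfl | rfl | ⟨y, rfl⟩
    · exact absurd h (lt_irrefl _)
    · exact ⟨barR LLP0, Or.inl ⟨LLP0, ⟨0, by simp [LLP0, LP.mk_snd]⟩, rfl⟩,
        bot_lt_toBar _, toBar_lt_top _⟩
    · rcases LL.cases y with ⟨p, rfl⟩ | ⟨q, rfl⟩
      · obtain ⟨z, hz, hz2⟩ := LP_rat_above p.val
        refine ⟨barL (LLPP.mk z (mkpos hz2)), Or.inr ⟨_, hz, rfl⟩, bot_lt_toBar _, ?_⟩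
        exact barL_lt_barL.2 (LLPP.lt_iff.2 hz2)
      · by_cases hq : LLP0 < q
        · obtain ⟨z, hz, hz1, hz2⟩ := LP_rat_btwn hq
          exact ⟨barR z, Or.inl ⟨z, hz, rfl⟩, bot_lt_toBar _, barR_lt_barR.2 hz2⟩
        · obtain ⟨z, hz, hz2⟩ := LP_rat_above LLP0
          refine ⟨barL (LLPP.mk z (mkpos hz2)), Or.inr ⟨_, hz, rfl⟩, bot_lt_toBar _, ?_⟩
          calc barL (LLPP.mk z (mkpos hz2)) < barR LLP0 := barL_lt_barR _ _
          _ ≤ barR q := toBar_le_toBar.2 (LL.inr_le_inr.2 (LLP0_le q))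
  · exact absurd h not_top_lt
  · -- u = x.toBar
    rcases LL.cases x with ⟨p, rfl⟩ | ⟨q, rfl⟩
    · -- u = barL p
      rcases LLB_cases v with rfl | rfl | ⟨y, rfl⟩
      · exact absurd h (fun _ => (not_toBar_le_bot _ (le_of_lt h)))
      · exact ⟨barR LLP0, Or.inl ⟨LLP0, ⟨0, by simp [LLP0, LP.mk_snd]⟩, rfl⟩,
          barL_lt_barR _ _, toBar_lt_top _⟩
      · rcases LL.cases y with ⟨p', rfl⟩ | ⟨q', rfl⟩
        · -- barL p < barL p' : p'.val < p.val
          have hpp : p'.val < p.val := LLPP.lt_iff.1 (barL_lt_barL.1 h)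
          obtain ⟨z, hz, hz1, hz2⟩ := LP_rat_btwn hpp
          refine ⟨barL (LLPP.mk z (mkpos hz1)), Or.inr ⟨_, hz, rfl⟩, ?_, ?_⟩
          · exact barL_lt_barL.2 (LLPP.lt_iff.2 hz2)
          · exact barL_lt_barL.2 (LLPP.lt_iff.2 hz1)
        · -- barL p < barR q'
          obtain ⟨z, hz, hz1, hz2⟩ := LP_rat_btwn (LLP0_lt_pos p)
          refine ⟨barL (LLPP.mk z (mkpos hz1)), Or.inr ⟨_, hz, rfl⟩, ?_, barL_lt_barR _ _⟩
          exact barL_lt_barL.2 (LLPP.lt_iff.2 hz2)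
    · -- u = barR q
      rcases LLB_cases v with rfl | rfl | ⟨y, rfl⟩
      · exact absurd h (fun _ => (not_toBar_le_bot _ (le_of_lt h)))
      · obtain ⟨z, hz, hz2⟩ := LP_rat_above q
        exact ⟨barR z, Or.inl ⟨z, hz, rfl⟩, barR_lt_barR.2 hz2, toBar_lt_top _⟩
      · rcases LL.cases y with ⟨p', rfl⟩ | ⟨q', rfl⟩
        · exact absurd (le_of_lt h) not_barR_le_barL
        · obtain ⟨z, hz, hz1, hz2⟩ := LP_rat_btwn (barR_lt_barR.1 h)
          exact ⟨barR z, Or.inl ⟨z, hz, rfl⟩, barR_lt_barR.2 hz1, barR_lt_barR.2 hz2⟩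

instance : DenselyOrdered LongLineBar :=
  ⟨fun _ _ h => let ⟨w, _, h1, h2⟩ := LLB_rat_btwn h; ⟨w, h1, h2⟩⟩

-- ### countability of initial segments; uncountability of SOmega
lemma Ord_Iio_countable {o : Ordinal} (h : o < (Cardinal.aleph 1).ord) :
    (Set.Iio o).Countable := by
  rw [Cardinal.countable_iff_lt_aleph_one, Ordinal.mk_Iio_ordinal]
  have hcard : o.card < Cardinal.aleph 1 := Cardinal.lt_ord.1 h
  rw [← not_le]
  intro hle
  rw [Cardinal.aleph_one_le_lift] at hle
  exact absurd hcard (not_lt.2 hle)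

lemma SOmega.val_injective : Function.Injective SOmega.val := fun _ _ h => SOmega.ext h

lemma SOm_Iio_countable (Λ : SOmega) : (Set.Iio Λ : Set SOmega).Countable := by
  have : (Set.Iio Λ : Set SOmega) = SOmega.val ⁻¹' (Set.Iio Λ.val) := rfl
  rw [this]
  exact (Ord_Iio_countable Λ.lt_omega1).preimage SOmega.val_injective

lemma SOm_Iic_countable (Λ : SOmega) : (Set.Iic Λ : Set SOmega).Countable := by
  rw [← Set.Iio_union_right]
  exact (SOm_Iio_countable Λ).union (Set.countable_singleton _)

lemma SOm_uncountable : ¬ (Set.univ : Set SOmega).Countable := by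
  intro h
  have h2 : (Set.Iio ((Cardinal.aleph 1).ord) : Set Ordinal).Countable := by
    refine Set.Countable.mono ?_ (h.image SOmega.val)
    intro o ho
    exact ⟨SOmega.mk o ho, trivial, rfl⟩
  rw [Cardinal.countable_iff_lt_aleph_one, Ordinal.mk_Iio_ordinal, Cardinal.card_ord] at h2
  have : (Cardinal.aleph 1) ≤ Cardinal.lift.{1} (Cardinal.aleph 1) := by
    rw [Cardinal.aleph_one_le_lift]
  exact absurd h2 (not_lt.2 this)

-- ### no uncountably indexed disjoint family of opens inside the closure of a countable set
lemma family_no_closure {c : Set LongLineBar} (hc : c.Countable)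
    (J : SOmega → Set LongLineBar) (α₀ : SOmega)
    (hopen : ∀ α, IsOpen (J α)) (hne : ∀ α, (J α).Nonempty)
    (hdisj : ∀ α β, α ≠ β → Disjoint (J α) (J β))
    (hsub : ∀ α, α₀ < α → J α ⊆ closure c) : False := by
  have key : ∀ α : SOmega, α₀ < α → ((J α) ∩ c).Nonempty := by
    intro α hα
    obtain ⟨x, hx⟩ := hne α
    exact (mem_closure_iff.1 (hsub α hα hx)) (J α) (hopen α) hx
  have : Countable (Set.Ioi α₀ : Set SOmega) := by
    have hcc : Countable c := hc.to_subtype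
    choose g hg using fun a : (Set.Ioi α₀ : Set SOmega) => key a.1 a.2
    have hinj : Function.Injective (fun a => (⟨g a, (hg a).2⟩ : c)) := by
      intro a b hab
      have hgab : g a = g b := congrArg Subtype.val hab
      by_contra hne'
      have hvne : a.1 ≠ b.1 := fun h => hne' (Subtype.ext h)
      exact Set.disjoint_left.1 (hdisj a.1 b.1 hvne) (hg a).1 (hgab ▸ (hg b).1)
    exact hinj.countable
  have huniv : (Set.univ : Set SOmega).Countable := by
    have h1 : (Set.Ioi α₀ : Set SOmega).Countable := Set.countable_coe_iff.1 this
    rw [← Set.Iic_union_Ioi (a := α₀)]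
    exact (SOm_Iic_countable α₀).union h1
  exact SOm_uncountable huniv

-- ### interval families at each level
noncomputable def i0 : Ico01 := ⟨0, le_refl 0, by norm_num⟩
noncomputable def i4 : Ico01 := ⟨1/4, by norm_num, by norm_num⟩
noncomputable def i3 : Ico01 := ⟨1/3, by norm_num, by norm_num⟩
noncomputable def i2 : Ico01 := ⟨1/2, by norm_num, by norm_num⟩

def posmk (α : SOmega) (t : Ico01) (h : 0 < (t : ℝ)) : LongLinePlusPos :=
  LLPP.mk (LP.mk α t) ⟨LP.mk α i0, LP.lt_iff.2 (Or.inr ⟨rfl, h⟩)⟩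

lemma posmk_val (α t h) : (posmk α t h).val = LP.mk α t := rfl

def topFam (α : SOmega) : Set LongLineBar := Ioo (barR (LP.mk α i0)) (barR (LP.mk α i2))
def botFam (α : SOmega) : Set LongLineBar :=
  Ioo (barL (posmk α i2 (by norm_num [i2]))) (barL (posmk α i4 (by norm_num [i4])))

lemma topFam_isOpen (α : SOmega) : IsOpen (topFam α) := isOpen_Ioo
lemma botFam_isOpen (α : SOmega) : IsOpen (botFam α) := isOpen_Ioo

lemma topFam_nonempty (α : SOmega) : (topFam α).Nonempty := by
  refine ⟨barR (LP.mk α i4), ?_, ?_⟩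
  · refine barR_lt_barR.2 (LP.lt_iff.2 (Or.inr ⟨rfl, ?_⟩))
    rw [LP.mk_snd, LP.mk_snd]; exact Ico01.lt_iff.2 (by norm_num [i0, i4])
  · refine barR_lt_barR.2 (LP.lt_iff.2 (Or.inr ⟨rfl, ?_⟩))
    rw [LP.mk_snd, LP.mk_snd]; exact Ico01.lt_iff.2 (by norm_num [i2, i4])

lemma botFam_nonempty (α : SOmega) : (botFam α).Nonempty := by
  refine ⟨barL (posmk α i3 (by norm_num [i3])), ?_, ?_⟩
  · refine barL_lt_barL.2 (LLPP.lt_iff.2 ?_)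
    refine LP.lt_iff.2 (Or.inr ⟨rfl, ?_⟩)
    rw [posmk_val, posmk_val, LP.mk_snd, LP.mk_snd]; exact Ico01.lt_iff.2 (by norm_num [i2, i3])
  · refine barL_lt_barL.2 (LLPP.lt_iff.2 ?_)
    refine LP.lt_iff.2 (Or.inr ⟨rfl, ?_⟩)
    rw [posmk_val, posmk_val, LP.mk_snd, LP.mk_snd]; exact Ico01.lt_iff.2 (by norm_num [i4, i3])

lemma topFam_mem {α : SOmega} {w : LongLineBar} (hw : w ∈ topFam α) :
    ∃ q : LongLinePlus, w = barR q ∧ q.fst = α := by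
  obtain ⟨h1, h2⟩ := hw
  rcases LLB_cases w with rfl | rfl | ⟨x, rfl⟩
  · exact absurd h1 (by simp)
  · exact absurd (le_of_lt h2) (not_top_le_toBar _)
  · rcases LL.cases x with ⟨p, rfl⟩ | ⟨q, rfl⟩
    · exact absurd (le_of_lt h1) (fun h => LL.not_inr_le_inl (toBar_le_toBar.1 h))
    · refine ⟨q, rfl, ?_⟩
      have hq1 := barR_lt_barR.1 h1
      have hq2 := barR_lt_barR.1 h2
      have hge : α ≤ q.fst := LP.fst_mono (le_of_lt hq1)
      have hle : q.fst ≤ α := LP.fst_mono (le_of_lt hq2)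
      exact le_antisymm hle hge

lemma botFam_mem {α : SOmega} {w : LongLineBar} (hw : w ∈ botFam α) :
    ∃ p : LongLinePlusPos, w = barL p ∧ p.val.fst = α := by
  obtain ⟨h1, h2⟩ := hw
  rcases LLB_cases w with rfl | rfl | ⟨x, rfl⟩
  · exact absurd h1 (by simp)
  · exact absurd (le_of_lt h2) (not_top_le_toBar _)
  · rcases LL.cases x with ⟨p, rfl⟩ | ⟨q, rfl⟩
    · refine ⟨p, rfl, ?_⟩
      have hq1 : p.val < (posmk α i2 (by norm_num [i2])).val := LLPP.lt_iff.1 (barL_lt_barL.1 h1)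
      have hq2 : (posmk α i4 (by norm_num [i4])).val < p.val := LLPP.lt_iff.1 (barL_lt_barL.1 h2)
      have hle : p.val.fst ≤ α := LP.fst_mono (le_of_lt hq1)
      have hge : α ≤ p.val.fst := LP.fst_mono (le_of_lt hq2)
      exact le_antisymm hle hge
    · exact absurd (le_of_lt h2) (fun h => LL.not_inr_le_inl (toBar_le_toBar.1 h))

lemma barR_injective : Function.Injective barR := by
  intro q q' heq
  exact le_antisymm (LL.inr_le_inr.1 (toBar_le_toBar.1 (le_of_eq heq)))
    (LL.inr_le_inr.1 (toBar_le_toBar.1 (le_of_eq heq.symm)))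

lemma barL_injective : Function.Injective barL := by
  intro p p' heq
  exact le_antisymm (LL.inl_le_inl.1 (toBar_le_toBar.1 (le_of_eq heq.symm)))
    (LL.inl_le_inl.1 (toBar_le_toBar.1 (le_of_eq heq)))

lemma topFam_disjoint (α β : SOmega) (h : α ≠ β) : Disjoint (topFam α) (topFam β) := by
  rw [Set.disjoint_left]
  intro w hwα hwβ
  obtain ⟨q, rfl, hq⟩ := topFam_mem hwα
  obtain ⟨q', heq, hq'⟩ := topFam_mem hwβ
  exact h (hq ▸ (barR_injective heq ▸ hq'))

lemma botFam_disjoint (α β : SOmega) (h : α ≠ β) : Disjoint (botFam α) (botFam β) := by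
  rw [Set.disjoint_left]
  intro w hwα hwβ
  obtain ⟨p, rfl, hp⟩ := botFam_mem hwα
  obtain ⟨p', heq, hp'⟩ := botFam_mem hwβ
  exact h (hp ▸ (barL_injective heq ▸ hp'))

-- thresholds
lemma topFam_threshold {x : LongLineBar} (hx : x ≠ ⊤) :
    ∃ α₀ : SOmega, ∀ α, α₀ < α → topFam α ⊆ Set.Ioi x := by
  have key : ∀ α₀ : SOmega, (∀ α, α₀ < α → x ≤ barR (LP.mk α i0)) →
      ∀ α, α₀ < α → topFam α ⊆ Set.Ioi x := by
    intro α₀ hle α hα w hw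
    exact lt_of_le_of_lt (hle α hα) hw.1
  rcases LLB_cases x with rfl | rfl | ⟨y, rfl⟩
  · exact ⟨SOmega.mk 0 zero_lt_omega1, key _ (fun α _ => bot_le)⟩
  · exact absurd rfl hx
  · rcases LL.cases y with ⟨p, rfl⟩ | ⟨q, rfl⟩
    · exact ⟨SOmega.mk 0 zero_lt_omega1, key _ (fun α _ => le_of_lt (barL_lt_barR _ _))⟩
    · refine ⟨q.fst, key _ (fun α hα => ?_)⟩
      exact le_of_lt (barR_lt_barR.2 (LP.lt_iff.2 (Or.inl hα)))

lemma botFam_threshold {x : LongLineBar} (hx : x ≠ ⊥) :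
    ∃ α₀ : SOmega, ∀ α, α₀ < α → botFam α ⊆ Set.Iio x := by
  have key : ∀ α₀ : SOmega, (∀ α, α₀ < α → barL (posmk α i4 (by norm_num [i4])) ≤ x) →
      ∀ α, α₀ < α → botFam α ⊆ Set.Iio x := by
    intro α₀ hle α hα w hw
    exact lt_of_lt_of_le hw.2 (hle α hα)
  rcases LLB_cases x with rfl | rfl | ⟨y, rfl⟩
  · exact absurd rfl hx
  · exact ⟨SOmega.mk 0 zero_lt_omega1, key _ (fun α _ => le_top)⟩
  · rcases LL.cases y with ⟨p, rfl⟩ | ⟨q, rfl⟩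
    · refine ⟨p.val.fst, key _ (fun α hα => ?_)⟩
      refine le_of_lt (barL_lt_barL.2 (LLPP.lt_iff.2 ?_))
      exact LP.lt_iff.2 (Or.inl hα)
    · exact ⟨SOmega.mk 0 zero_lt_omega1, key _ (fun α _ => le_of_lt (barL_lt_barR _ _))⟩

open TopologicalSpace in
lemma sep_conn_subsingleton {S : Set LongLineBar} (hconn : IsPreconnected S)
    (hsep : IsSeparable S) (hext : ⊥ ∈ S ∨ ⊤ ∈ S) : S.Subsingleton := by
  obtain ⟨c, hc, hSc⟩ := hsep
  intro x hx y hy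
  by_contra hne
  have hOC : S.OrdConnected := hconn.ordConnected
  rcases hext with hbot | htop
  · -- some element z ∈ S with ⊥ < z
    have hz : ∃ z ∈ S, z ≠ ⊥ := by
      by_cases hxb : x = ⊥
      · exact ⟨y, hy, fun h => hne (hxb.trans h.symm)⟩
      · exact ⟨x, hx, hxb⟩
    obtain ⟨z, hzS, hzb⟩ := hz
    obtain ⟨α₀, hα₀⟩ := botFam_threshold hzb
    refine family_no_closure hc botFam α₀ botFam_isOpen botFam_nonempty botFam_disjoint ?_
    intro α hα w hw
    have hwS : w ∈ S := hOC.out hbot hzS ⟨bot_le, le_of_lt (hα₀ α hα hw)⟩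
    exact hSc hwS
  · have hz : ∃ z ∈ S, z ≠ ⊤ := by
      by_cases hxb : x = ⊤
      · exact ⟨y, hy, fun h => hne (hxb.trans h.symm)⟩
      · exact ⟨x, hx, hxb⟩
    obtain ⟨z, hzS, hzt⟩ := hz
    obtain ⟨α₀, hα₀⟩ := topFam_threshold hzt
    refine family_no_closure hc topFam α₀ topFam_isOpen topFam_nonempty topFam_disjoint ?_
    intro α hα w hw
    have hwS : w ∈ S := hOC.out hzS htop ⟨le_of_lt (hα₀ α hα hw), le_top⟩
    exact hSc hwS

-- ### Lset and separability of bounded closed intervals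
def Lset : Set LongLineBar := Set.Ioo ⊥ ⊤

lemma mem_Lset_iff {w : LongLineBar} : w ∈ Lset ↔ w ≠ ⊥ ∧ w ≠ ⊤ := by
  rw [Lset, Set.mem_Ioo, bot_lt_iff_ne_bot, lt_top_iff_ne_top]

lemma toBar_mem_Lset (x : LongLine) : x.toBar ∈ Lset := ⟨bot_lt_toBar x, toBar_lt_top x⟩

lemma Lset_cases {w : LongLineBar} (hw : w ∈ Lset) : ∃ x : LongLine, w = x.toBar := by
  rcases LLB_cases w with rfl | rfl | ⟨x, rfl⟩
  · exact absurd hw (by simp [mem_Lset_iff])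
  · exact absurd hw (by simp [mem_Lset_iff])
  · exact ⟨x, rfl⟩

def fstL (x : LongLine) : SOmega :=
  (ofLex (show (LongLinePlusPos)ᵒᵈ ⊕ₗ LongLinePlus from x)).elim
    (fun p => (LLPP.val (OrderDual.ofDual p)).fst) LP.fst

lemma fstL_inl (p : LongLinePlusPos) : fstL (LL.inl p) = p.val.fst := rfl
lemma fstL_inr (q : LongLinePlus) : fstL (LL.inr q) = q.fst := rfl

lemma fst_le_of_inr_le {q : LongLinePlus} {x : LongLine} (h : LL.inr q ≤ x) :
    q.fst ≤ fstL x := by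
  rcases LL.cases x with ⟨p, rfl⟩ | ⟨q', rfl⟩
  · exact absurd h LL.not_inr_le_inl
  · rw [fstL_inr]; exact LP.fst_mono (LL.inr_le_inr.1 h)

lemma fst_le_of_le_inl {p : LongLinePlusPos} {x : LongLine} (h : x ≤ LL.inl p) :
    p.val.fst ≤ fstL x := by
  rcases LL.cases x with ⟨p', rfl⟩ | ⟨q', rfl⟩
  · rw [fstL_inl]; exact LP.fst_mono (LLPP.le_iff.1 (LL.inl_le_inl.1 h))
  · exact absurd h (fun h2 => LL.not_inr_le_inl h2)

lemma ratIco_countable : (ratIco : Set Ico01).Countable := by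
  have : ratIco = Subtype.val ⁻¹' (Set.range ((↑) : ℚ → ℝ)) := by
    ext t; simp [ratIco, eq_comm]
  rw [this]
  exact (Set.countable_range _).preimage Subtype.val_injective

lemma QR_countable (Λ : SOmega) :
    ({q : LongLinePlus | q.fst ≤ Λ ∧ q ∈ ratLP}).Countable := by
  have h : {q : LongLinePlus | q.fst ≤ Λ ∧ q ∈ ratLP}
      = (fun pr : SOmega × Ico01 => LP.mk pr.1 pr.2) '' ((Set.Iic Λ) ×ˢ ratIco) := by
    ext q
    constructor
    · rintro ⟨h1, h2⟩
      exact ⟨(q.fst, q.snd), ⟨h1, h2⟩, LP.eta q⟩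
    · rintro ⟨⟨α, t⟩, ⟨h1, h2⟩, rfl⟩
      exact ⟨by rw [LP.mk_fst]; exact h1, by rw [ratLP, Set.mem_setOf_eq, LP.mk_snd]; exact h2⟩
  rw [h]
  exact (((SOm_Iic_countable Λ).prod ratIco_countable)).image _

lemma LLPP.val_injective : Function.Injective LLPP.val := fun _ _ h => LLPP.ext h

lemma QL_countable (Λ : SOmega) :
    ({p : LongLinePlusPos | p.val.fst ≤ Λ ∧ p.val ∈ ratLP}).Countable := by
  have h : {p : LongLinePlusPos | p.val.fst ≤ Λ ∧ p.val ∈ ratLP}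
      = LLPP.val ⁻¹' {q : LongLinePlus | q.fst ≤ Λ ∧ q ∈ ratLP} := rfl
  rw [h]
  exact (QR_countable Λ).preimage LLPP.val_injective

open TopologicalSpace in
lemma icc_isSeparable {a b : LongLineBar} (ha : a ∈ Lset) (hb : b ∈ Lset) :
    IsSeparable (Set.Icc a b) := by
  obtain ⟨xa, rfl⟩ := Lset_cases ha
  obtain ⟨xb, rfl⟩ := Lset_cases hb
  set Λ : SOmega := max (fstL xa) (fstL xb) with hΛ
  set D : Set LongLineBar := Set.Icc xa.toBar xb.toBar ∩ ratBar with hD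
  have hDc : D.Countable := by
    have hsub : D ⊆ (barR '' {q : LongLinePlus | q.fst ≤ Λ ∧ q ∈ ratLP}) ∪
        (barL '' {p : LongLinePlusPos | p.val.fst ≤ Λ ∧ p.val ∈ ratLP}) := by
      rintro w ⟨⟨hwa, hwb⟩, hrat⟩
      rcases hrat with ⟨q, hq, rfl⟩ | ⟨p, hp, rfl⟩
      · left
        refine ⟨q, ⟨?_, hq⟩, rfl⟩
        exact le_trans (fst_le_of_inr_le (toBar_le_toBar.1 hwb)) (le_max_right _ _)
      · right
        refine ⟨p, ⟨?_, hp⟩, rfl⟩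
        exact le_trans (fst_le_of_le_inl (toBar_le_toBar.1 hwa)) (le_max_left _ _)
    exact Set.Countable.mono hsub (((QR_countable Λ).image barR).union ((QL_countable Λ).image barL))
  refine ⟨insert xa.toBar D, hDc.insert _, ?_⟩
  intro w hw
  rw [mem_closure_iff]
  intro U hU hwU
  obtain ⟨l, u, hwlu, hluU⟩ := (mem_nhds_iff_exists_Ioo_subset'
    ⟨⊥, lt_of_lt_of_le (bot_lt_toBar xa) hw.1⟩ ⟨⊤, lt_of_le_of_lt hw.2 (toBar_lt_top xb)⟩).1
    (hU.mem_nhds hwU)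
  by_cases hla : l < xa.toBar
  · exact ⟨xa.toBar, hluU ⟨hla, lt_of_le_of_lt hw.1 hwlu.2⟩, Set.mem_insert _ _⟩
  · push_neg at hla
    obtain ⟨z, hzrat, hz1, hz2⟩ := LLB_rat_btwn hwlu.1
    refine ⟨z, hluU ⟨hz1, lt_trans hz2 hwlu.2⟩, Set.mem_insert_of_mem _ ?_⟩
    exact ⟨⟨le_trans hla (le_of_lt hz1), le_trans (le_of_lt hz2) hw.2⟩, hzrat⟩

-- basic topological facts about Lset
lemma closure_Lset : closure Lset = Set.univ := by
  rw [Lset, closure_Ioo (ne_of_lt LLB_bot_lt_top)]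
  exact Set.eq_univ_iff_forall.2 (fun w => ⟨bot_le, le_top⟩)

lemma Lset_isPreconnected : IsPreconnected Lset := isPreconnected_Ioo

lemma icc_isPreconnected {a b : LongLineBar} : IsPreconnected (Set.Icc a b) := isPreconnected_Icc

lemma Lset_mem_exists_lt {w : LongLineBar} (hw : w ∈ Lset) :
    (∃ l ∈ Lset, l < w) ∧ (∃ u ∈ Lset, w < u) := by
  obtain ⟨l, hl1, hl2⟩ := exists_between hw.1
  obtain ⟨u, hu1, hu2⟩ := exists_between hw.2
  exact ⟨⟨l, ⟨hl1, lt_trans hl2 hw.2⟩, hl2⟩, ⟨u, ⟨lt_trans hw.1 hu1, hu2⟩, hu1⟩⟩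

lemma Lset_nonempty : Lset.Nonempty := ⟨barR LLP0, toBar_mem_Lset _⟩

-- ### product space machinery
open TopologicalSpace

open Classical in
noncomputable def comp (u : LongLineBar) : Set LongLineBar := if u ∈ Lset then Lset else {u}

lemma comp_pos {u : LongLineBar} (h : u ∈ Lset) : comp u = Lset := if_pos h
lemma comp_neg {u : LongLineBar} (h : u ∉ Lset) : comp u = {u} := if_neg h

def SCset {n : ℕ} (z : Fin n → LongLineBar) : Set (Fin n → LongLineBar) :=
  ⋃₀ {C | z ∈ C ∧ IsPreconnected C ∧ IsSeparable C}

lemma mem_SCset_self {n : ℕ} (z : Fin n → LongLineBar) : z ∈ SCset z :=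
  ⟨{z}, ⟨rfl, isPreconnected_singleton, (Set.countable_singleton z).isSeparable⟩, rfl⟩

lemma SCset_isPreconnected {n : ℕ} (z : Fin n → LongLineBar) : IsPreconnected (SCset z) :=
  isPreconnected_sUnion z _ (fun _ h => h.1) (fun _ h => h.2.1)

lemma isSeparable_pi {n : ℕ} {s : Fin n → Set LongLineBar} (h : ∀ i, IsSeparable (s i)) :
    IsSeparable (Set.univ.pi s) := by
  choose c hc1 hc2 using h
  refine ⟨Set.univ.pi c, ?_, ?_⟩
  · have := Set.countable_pi hc1
    refine Set.Countable.mono ?_ this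
    intro f hf i
    exact hf i trivial
  · intro f hf
    rw [closure_pi_set]
    exact fun i _ => hc2 i (hf i trivial)

lemma min_mem_Lset {u v : LongLineBar} (hu : u ∈ Lset) (hv : v ∈ Lset) : min u v ∈ Lset := by
  rcases min_choice u v with h | h <;> rw [h] <;> assumption

lemma max_mem_Lset {u v : LongLineBar} (hu : u ∈ Lset) (hv : v ∈ Lset) : max u v ∈ Lset := by
  rcases max_choice u v with h | h <;> rw [h] <;> assumption

lemma not_mem_Lset_iff {u : LongLineBar} : u ∉ Lset ↔ u = ⊥ ∨ u = ⊤ := by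
  rw [mem_Lset_iff]; tauto

-- the computation of SCset
lemma SCset_eq {n : ℕ} (z : Fin n → LongLineBar) :
    SCset z = Set.univ.pi (fun i => comp (z i)) := by
  apply Set.Subset.antisymm
  · rintro y ⟨C, ⟨hzC, hconn, hsep⟩, hyC⟩
    intro i _
    set S : Set LongLineBar := (fun v => v i) '' C with hS
    have hSconn : IsPreconnected S := hconn.image _ (continuous_apply i).continuousOn
    have hSsep : IsSeparable S := hsep.image (continuous_apply i)
    have hzS : z i ∈ S := ⟨z, hzC, rfl⟩
    have hyS : y i ∈ S := ⟨y, hyC, rfl⟩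
    by_cases h : z i ∈ Lset
    · change y i ∈ comp (z i)
      show y i ∈ comp (z i)
      rw [comp_pos h, mem_Lset_iff]
      constructor
      · intro hbot
        have := sep_conn_subsingleton hSconn hSsep (Or.inl (hbot ▸ hyS)) hzS hyS
        rw [mem_Lset_iff] at h
        exact h.1 (this.trans hbot)
      · intro htop
        have := sep_conn_subsingleton hSconn hSsep (Or.inr (htop ▸ hyS)) hzS hyS
        rw [mem_Lset_iff] at h
        exact h.2 (this.trans htop)
    · show y i ∈ comp (z i)
      rw [comp_neg h]
      have hext : (⊥ : LongLineBar) ∈ S ∨ (⊤ : LongLineBar) ∈ S := by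
        rcases not_mem_Lset_iff.1 h with h2 | h2
        · exact Or.inl (h2 ▸ hzS)
        · exact Or.inr (h2 ▸ hzS)
      exact sep_conn_subsingleton hSconn hSsep hext hyS hzS
  · intro y hy
    classical
    set C : Set (Fin n → LongLineBar) := Set.univ.pi (fun i =>
      if z i ∈ Lset then Set.Icc (min (z i) (y i)) (max (z i) (y i)) else {z i}) with hC
    have hyLset : ∀ i, z i ∈ Lset → y i ∈ Lset := by
      intro i hi
      have := hy i trivial
      have h2 : y i ∈ comp (z i) := this
      rwa [comp_pos hi] at h2
    have hzC : z ∈ C := by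
      intro i _
      by_cases h : z i ∈ Lset
      · simp only [if_pos h]; exact ⟨min_le_left _ _, le_max_left _ _⟩
      · simp only [if_neg h]; rfl
    have hyC : y ∈ C := by
      intro i _
      by_cases h : z i ∈ Lset
      · simp only [if_pos h]; exact ⟨min_le_right _ _, le_max_right _ _⟩
      · simp only [if_neg h]
        have h2 : y i ∈ comp (z i) := hy i trivial
        rwa [comp_neg h] at h2
    refine ⟨C, ⟨hzC, ?_, ?_⟩, hyC⟩
    · refine isPreconnected_univ_pi (fun i => ?_)
      by_cases h : z i ∈ Lset
      · simp only [if_pos h]; exact icc_isPreconnected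
      · simp only [if_neg h]; exact isPreconnected_singleton
    · refine isSeparable_pi (fun i => ?_)
      by_cases h : z i ∈ Lset
      · simp only [if_pos h]
        exact icc_isSeparable (min_mem_Lset h (hyLset i h)) (max_mem_Lset h (hyLset i h))
      · simp only [if_neg h]
        exact (Set.countable_singleton _).isSeparable

open Classical in
lemma closure_comp (u : LongLineBar) :
    closure (comp u) = if u ∈ Lset then Set.univ else {u} := by
  by_cases h : u ∈ Lset
  · rw [comp_pos h, if_pos h, closure_Lset]
  · rw [comp_neg h, if_neg h, closure_singleton]

open Classical in
lemma closure_SCset {n : ℕ} (z : Fin n → LongLineBar) :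
    closure (SCset z) = Set.univ.pi (fun i => if z i ∈ Lset then Set.univ else {z i}) := by
  rw [SCset_eq, closure_pi_set]
  exact congrArg (Set.pi Set.univ) (funext (fun i => closure_comp (z i)))

-- homeomorphism invariance
lemma SCset_image_subset {n : ℕ} (e : (Fin n → LongLineBar) ≃ₜ (Fin n → LongLineBar))
    (z : Fin n → LongLineBar) : e '' SCset z ⊆ SCset (e z) := by
  rintro _ ⟨y, ⟨C, ⟨hzC, hconn, hsep⟩, hyC⟩, rfl⟩
  exact ⟨e '' C, ⟨⟨z, hzC, rfl⟩, hconn.image _ e.continuous.continuousOn,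
    hsep.image e.continuous⟩, ⟨y, hyC, rfl⟩⟩

lemma SCset_image {n : ℕ} (e : (Fin n → LongLineBar) ≃ₜ (Fin n → LongLineBar))
    (z : Fin n → LongLineBar) : e '' SCset z = SCset (e z) := by
  apply Set.Subset.antisymm (SCset_image_subset e z)
  have h2 := SCset_image_subset e.symm (e z)
  rw [e.symm_apply_apply] at h2
  intro w hw
  obtain ⟨v, hv, rfl⟩ : ∃ v ∈ SCset z, e v = w := by
    have : e.symm w ∈ SCset z := h2 ⟨w, hw, rfl⟩
    exact ⟨e.symm w, this, e.apply_symm_apply w⟩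
  exact ⟨v, hv, rfl⟩

-- ### part 1: characterization of W
lemma self_mem_comp (u : LongLineBar) : u ∈ comp u := by
  by_cases h : u ∈ Lset
  · rw [comp_pos h]; exact h
  · rw [comp_neg h]; rfl

lemma Lset_exists_ne (a : LongLineBar) : ∃ b ∈ Lset, b ≠ a := by
  obtain ⟨pt, hpt⟩ := Lset_nonempty
  obtain ⟨⟨l, hl, hlt⟩, _⟩ := Lset_mem_exists_lt hpt
  by_cases h : pt = a
  · exact ⟨l, hl, fun h2 => absurd (h2.symm ▸ (h ▸ hlt)) (lt_irrefl _)⟩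
  · exact ⟨pt, hpt, h⟩

lemma mem_W_iff_not_nontrivial {n : ℕ} (x : Fin n → LongLineBar) :
    (∀ i, x i = ⊥ ∨ x i = ⊤) ↔ ¬ (SCset x).Nontrivial := by
  constructor
  · intro hW
    have hcomp : ∀ i, comp (x i) = {x i} := fun i => comp_neg (not_mem_Lset_iff.2 (hW i))
    have hsc : SCset x = {x} := by
      rw [SCset_eq]
      rw [show (fun i => comp (x i)) = fun i => ({x i} : Set LongLineBar) from funext hcomp]
      exact Set.univ_pi_singleton x
    rw [hsc]
    exact Set.not_nontrivial_singleton
  · intro hns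
    by_contra hW
    push_neg at hW
    obtain ⟨i, hi⟩ := hW
    have hiL : x i ∈ Lset := mem_Lset_iff.2 ⟨hi.1, hi.2⟩
    obtain ⟨b, hbL, hbne⟩ := Lset_exists_ne (x i)
    refine hns ⟨Function.update x i b, ?_, x, mem_SCset_self x, ?_⟩
    · rw [SCset_eq]
      intro j _
      by_cases hj : j = i
      · subst hj
        rw [Function.update_self]
        show b ∈ comp (x j)
        rw [comp_pos hiL]
        exact hbL
      · rw [Function.update_of_ne hj]
        exact self_mem_comp (x j)
    · intro heq
      exact hbne (by rw [← congrFun heq i, Function.update_self])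

lemma nontrivial_image_iff {n : ℕ} (e : (Fin n → LongLineBar) ≃ₜ (Fin n → LongLineBar))
    {S : Set (Fin n → LongLineBar)} : (e '' S).Nontrivial ↔ S.Nontrivial := by
  constructor
  · rintro ⟨_, ⟨a, ha, rfl⟩, _, ⟨b, hb, rfl⟩, hne⟩
    exact ⟨a, ha, b, hb, fun h => hne (h ▸ rfl)⟩
  · rintro ⟨a, ha, b, hb, hne⟩
    exact ⟨e a, ⟨a, ha, rfl⟩, e b, ⟨b, hb, rfl⟩, fun h => hne (e.injective h)⟩

lemma mem_W_map_iff {n : ℕ} (e : (Fin n → LongLineBar) ≃ₜ (Fin n → LongLineBar))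
    (x : Fin n → LongLineBar) :
    (∀ i, e x i = ⊥ ∨ e x i = ⊤) ↔ (∀ i, x i = ⊥ ∨ x i = ⊤) := by
  rw [mem_W_iff_not_nontrivial, mem_W_iff_not_nontrivial, ← SCset_image e x,
    nontrivial_image_iff e]

-- ### cut-point lemmas
lemma edge_not_preconnected {n : ℕ} (z : Fin n → LongLineBar) (i₀ : Fin n)
    (hz : ∀ j, j ≠ i₀ → z j ∉ Lset) (hzi : z i₀ ∈ Lset)
    (w : Fin n → LongLineBar) (hw : w ∈ SCset z) : ¬ IsPreconnected (SCset z \ {w}) := by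
  intro hP
  rw [SCset_eq] at hw
  have hwi : w i₀ ∈ Lset := by
    have h2 : w i₀ ∈ comp (z i₀) := hw i₀ trivial
    rwa [comp_pos hzi] at h2
  have hwj : ∀ j, j ≠ i₀ → w j = z j := by
    intro j hj
    have h2 : w j ∈ comp (z j) := hw j trivial
    rwa [comp_neg (hz j hj)] at h2
  obtain ⟨⟨lo, hlo, hlolt⟩, ⟨hi, hhi, hhilt⟩⟩ := Lset_mem_exists_lt hwi
  set U : Set (Fin n → LongLineBar) := {v | v i₀ < w i₀} with hU
  set V : Set (Fin n → LongLineBar) := {v | w i₀ < v i₀} with hV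
  have hUopen : IsOpen U := isOpen_Iio.preimage (continuous_apply i₀)
  have hVopen : IsOpen V := isOpen_Ioi.preimage (continuous_apply i₀)
  have hmemS : ∀ a ∈ Lset, Function.update w i₀ a ∈ SCset z := by
    intro a ha
    rw [SCset_eq]
    intro j _
    by_cases hj : j = i₀
    · subst hj
      rw [Function.update_self]
      show a ∈ comp (z j)
      rw [comp_pos hzi]; exact ha
    · rw [Function.update_of_ne hj]
      show w j ∈ comp (z j)
      rw [comp_neg (hz j hj), hwj j hj]; rfl
  have hcover : SCset z \ {w} ⊆ U ∪ V := by
    rintro v ⟨hvS, hvne⟩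
    rw [SCset_eq] at hvS
    have : v i₀ ≠ w i₀ := by
      intro heq
      apply hvne
      funext j
      by_cases hj : j = i₀
      · subst hj; exact heq
      · have h2 : v j ∈ comp (z j) := hvS j trivial
        rw [comp_neg (hz j hj)] at h2
        rw [h2, ← hwj j hj]
    rcases lt_or_gt_of_ne this with h | h
    · exact Or.inl h
    · exact Or.inr h
  have hUne : ((SCset z \ {w}) ∩ U).Nonempty := by
    refine ⟨Function.update w i₀ lo, ⟨hmemS lo hlo, ?_⟩, ?_⟩
    · intro heq
      have := congrFun heq i₀
      rw [Function.update_self] at this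
      exact absurd (this ▸ hlolt) (lt_irrefl _)
    · show Function.update w i₀ lo i₀ < w i₀
      rw [Function.update_self]; exact hlolt
  have hVne : ((SCset z \ {w}) ∩ V).Nonempty := by
    refine ⟨Function.update w i₀ hi, ⟨hmemS hi hhi, ?_⟩, ?_⟩
    · intro heq
      have := congrFun heq i₀
      rw [Function.update_self] at this
      exact absurd (this ▸ hhilt) (lt_irrefl _)
    · show w i₀ < Function.update w i₀ hi i₀
      rw [Function.update_self]; exact hhilt
  obtain ⟨v, _, hvU, hvV⟩ := hP U V hUopen hVopen hcover hUne hVne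
  exact absurd (lt_trans (show v i₀ < w i₀ from hvU) (show w i₀ < v i₀ from hvV)) (lt_irrefl _)

lemma pi_diff_singleton_preconnected {n : ℕ} (c : Fin n → Set LongLineBar)
    (hc : ∀ i, IsPreconnected (c i)) (i₁ i₂ : Fin n) (hne12 : i₁ ≠ i₂)
    (h1 : (c i₁).Nontrivial) (h2 : (c i₂).Nontrivial)
    (w : Fin n → LongLineBar) (hw : w ∈ Set.univ.pi c) :
    IsPreconnected (Set.univ.pi c \ {w}) := by
  classical
  obtain ⟨u₁, hu₁, hu₁ne⟩ : ∃ u ∈ c i₁, u ≠ w i₁ := by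
    obtain ⟨a, ha, b, hb, hab⟩ := h1
    by_cases h : a = w i₁
    · exact ⟨b, hb, fun hh => hab (by rw [hh, h])⟩
    · exact ⟨a, ha, h⟩
  obtain ⟨u₂, hu₂, hu₂ne⟩ : ∃ u ∈ c i₂, u ≠ w i₂ := by
    obtain ⟨a, ha, b, hb, hab⟩ := h2
    by_cases h : a = w i₂
    · exact ⟨b, hb, fun hh => hab (by rw [hh, h])⟩
    · exact ⟨a, ha, h⟩
  set b : Fin n → LongLineBar := Function.update (Function.update w i₁ u₁) i₂ u₂ with hb
  have hb1 : b i₁ = u₁ := by rw [hb, Function.update_of_ne hne12, Function.update_self]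
  have hb2 : b i₂ = u₂ := by rw [hb, Function.update_self]
  have hbmem : b ∈ Set.univ.pi c := by
    intro j _
    by_cases hj2 : j = i₂
    · subst hj2; rw [hb2]; exact hu₂
    by_cases hj1 : j = i₁
    · subst hj1; rw [hb1]; exact hu₁
    · rw [hb, Function.update_of_ne hj2, Function.update_of_ne hj1]
      exact hw j trivial
  have hbne : b ≠ w := by
    intro h
    exact hu₁ne (by rw [← hb1, h])
  -- the sets T i a
  have Tdef : ∀ (i : Fin n) (a : LongLineBar),
      IsPreconnected (Set.univ.pi (fun j => if j = i then {a} else c j)) := by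
    intro i a
    refine isPreconnected_univ_pi (fun j => ?_)
    by_cases hj : j = i
    · simp only [if_pos hj]; exact isPreconnected_singleton
    · simp only [if_neg hj]; exact hc j
  have memT : ∀ (i : Fin n) (a : LongLineBar) (v : Fin n → LongLineBar),
      v i = a → (∀ j, j ≠ i → v j ∈ c j) →
      v ∈ Set.univ.pi (fun j => if j = i then ({a} : Set LongLineBar) else c j) := by
    intro i a v hvi hvj j _
    show v j ∈ (if j = i then ({a} : Set LongLineBar) else c j)
    by_cases hj : j = i
    · subst hj; rw [if_pos rfl, hvi]; rfl
    · rw [if_neg hj]; exact hvj j hj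
  have Tsub : ∀ (i : Fin n) (a : LongLineBar), a ∈ c i → a ≠ w i →
      Set.univ.pi (fun j => if j = i then {a} else c j) ⊆ Set.univ.pi c \ {w} := by
    intro i a hac hane v hv
    have hvj : ∀ j, v j ∈ (if j = i then ({a} : Set LongLineBar) else c j) :=
      fun j => hv j trivial
    have hvi : v i = a := by
      have := hvj i
      rwa [if_pos rfl] at this
    constructor
    · intro j _
      by_cases hj : j = i
      · subst hj; rw [hvi]; exact hac
      · have := hvj j
        rwa [if_neg hj] at this
    · intro heq
      exact hane (hvi.symm.trans (congrFun heq i))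
  refine isPreconnected_of_forall b (fun v hv => ?_)
  obtain ⟨istar, histar⟩ : ∃ j, v j ≠ w j := Function.ne_iff.1 hv.2
  set i' : Fin n := if istar = i₁ then i₂ else i₁ with hi'
  have hi'ne : i' ≠ istar := by
    rw [hi']
    by_cases h : istar = i₁
    · rw [if_pos h, h]; exact hne12.symm
    · rw [if_neg h]; exact fun hh => h hh.symm
  have hbi' : b i' ≠ w i' ∧ b i' ∈ c i' := by
    rw [hi']
    by_cases h : istar = i₁
    · rw [if_pos h, hb2]; exact ⟨hu₂ne, hu₂⟩
    · rw [if_neg h, hb1]; exact ⟨hu₁ne, hu₁⟩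
  set m : Fin n → LongLineBar := Function.update b istar (v istar) with hm
  have hvistar : v istar ∈ c istar := hv.1 istar trivial
  have hmT1 : m ∈ Set.univ.pi (fun j => if j = istar then {v istar} else c j) := by
    refine memT _ _ _ (by rw [hm, Function.update_self]) (fun j hj => ?_)
    rw [hm, Function.update_of_ne hj]
    exact hbmem j trivial
  have hmT2 : m ∈ Set.univ.pi (fun j => if j = i' then {b i'} else c j) := by
    refine memT _ _ _ ?_ (fun j hj => ?_)
    · rw [hm, Function.update_of_ne hi'ne]
    · by_cases hj2 : j = istar
      · subst hj2; rw [hm, Function.update_self]; exact hvistar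
      · rw [hm, Function.update_of_ne hj2]; exact hbmem j trivial
  refine ⟨Set.univ.pi (fun j => if j = istar then {v istar} else c j) ∪
      Set.univ.pi (fun j => if j = i' then {b i'} else c j),
    Set.union_subset (Tsub istar (v istar) hvistar histar) (Tsub i' (b i') hbi'.2 hbi'.1),
    Or.inr ?_, Or.inl ?_, IsPreconnected.union m hmT1 hmT2 (Tdef _ _) (Tdef _ _)⟩
  · exact memT _ _ _ rfl (fun j _ => hbmem j trivial)
  · exact memT _ _ _ rfl (fun j _ => hv.1 j trivial)

-- ### adjacency
def Adj {n : ℕ} (x y : Fin n → LongLineBar) : Prop :=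
  x ≠ y ∧ ∃ z : Fin n → LongLineBar, x ∈ closure (SCset z) ∧ y ∈ closure (SCset z) ∧
    ∀ w ∈ SCset z, ¬ IsPreconnected (SCset z \ {w})

lemma Lset_nontrivial : Lset.Nontrivial := by
  obtain ⟨pt, hpt⟩ := Lset_nonempty
  obtain ⟨⟨l, hl, hlt⟩, _⟩ := Lset_mem_exists_lt hpt
  exact ⟨l, hl, pt, hpt, ne_of_lt hlt⟩

lemma adj_iff {n : ℕ} {x y : Fin n → LongLineBar} (hx : ∀ i, x i = ⊥ ∨ x i = ⊤)
    (hy : ∀ i, y i = ⊥ ∨ y i = ⊤) : Adj x y ↔ ∃! i, x i ≠ y i := by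
  classical
  constructor
  · rintro ⟨hxy, z, hxc, hyc, hcut⟩
    have huniqL : ∀ i j, z i ∈ Lset → z j ∈ Lset → i = j := by
      intro i j hi hj
      by_contra hij
      apply hcut z (mem_SCset_self z)
      rw [SCset_eq]
      refine pi_diff_singleton_preconnected _ (fun k => ?_) i j hij ?_ ?_ z
        (fun k _ => self_mem_comp _)
      · by_cases hk : z k ∈ Lset
        · rw [comp_pos hk]; exact Lset_isPreconnected
        · rw [comp_neg hk]; exact isPreconnected_singleton
      · rw [comp_pos hi]; exact Lset_nontrivial
      · rw [comp_pos hj]; exact Lset_nontrivial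
    rw [closure_SCset] at hxc hyc
    have hfix : ∀ j, z j ∉ Lset → x j = z j ∧ y j = z j := by
      intro j hj
      have h1 : x j ∈ (if z j ∈ Lset then Set.univ else {z j}) := hxc j trivial
      have h2 : y j ∈ (if z j ∈ Lset then Set.univ else {z j}) := hyc j trivial
      rw [if_neg hj] at h1 h2
      exact ⟨h1, h2⟩
    obtain ⟨i₀, hi₀⟩ := Function.ne_iff.1 hxy
    have hzi₀ : z i₀ ∈ Lset := by
      by_contra hcon
      obtain ⟨e1, e2⟩ := hfix i₀ hcon
      exact hi₀ (e1.trans e2.symm)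
    refine ⟨i₀, hi₀, fun j hj => ?_⟩
    have hzj : z j ∈ Lset := by
      by_contra hcon
      obtain ⟨e1, e2⟩ := hfix j hcon
      exact hj (e1.trans e2.symm)
    exact huniqL j i₀ hzj hzi₀
  · rintro ⟨i₀, h1, h2⟩
    obtain ⟨pt, hpt⟩ := Lset_nonempty
    set z : Fin n → LongLineBar := Function.update x i₀ pt with hz
    have hzi₀ : z i₀ ∈ Lset := by rw [hz, Function.update_self]; exact hpt
    have hzj : ∀ j, j ≠ i₀ → z j ∉ Lset := by
      intro j hj
      rw [hz, Function.update_of_ne hj]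
      exact not_mem_Lset_iff.2 (hx j)
    have hyx : ∀ j, j ≠ i₀ → y j = x j := by
      intro j hj
      by_contra hcon
      exact hj (h2 j (fun hh => hcon hh.symm))
    refine ⟨Function.ne_iff.2 ⟨i₀, h1⟩, z, ?_, ?_, ?_⟩
    · rw [closure_SCset]
      intro j _
      show x j ∈ (if z j ∈ Lset then Set.univ else {z j})
      by_cases hj : j = i₀
      · subst hj; rw [if_pos hzi₀]; trivial
      · rw [if_neg (hzj j hj), hz, Function.update_of_ne hj]; rfl
    · rw [closure_SCset]
      intro j _
      show y j ∈ (if z j ∈ Lset then Set.univ else {z j})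
      by_cases hj : j = i₀
      · subst hj; rw [if_pos hzi₀]; trivial
      · rw [if_neg (hzj j hj), hz, Function.update_of_ne hj]
        exact hyx j hj
    · exact fun w hw => edge_not_preconnected z i₀ hzj hzi₀ w hw

lemma adj_map {n : ℕ} (e : (Fin n → LongLineBar) ≃ₜ (Fin n → LongLineBar))
    {x y : Fin n → LongLineBar} (hA : Adj x y) : Adj (e x) (e y) := by
  obtain ⟨hxy, z, hxc, hyc, hcut⟩ := hA
  have hclo : closure (SCset (e z)) = e '' closure (SCset z) := by
    rw [← SCset_image e z, e.image_closure]
  have hSCsymm : e.symm '' SCset (e z) = SCset z := by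
    have h2 := SCset_image e.symm (e z)
    rwa [e.symm_apply_apply] at h2
  refine ⟨fun h => hxy (e.injective h), e z, ?_, ?_, ?_⟩
  · rw [hclo]; exact ⟨x, hxc, rfl⟩
  · rw [hclo]; exact ⟨y, hyc, rfl⟩
  · intro w' hw' hP
    have hw : e.symm w' ∈ SCset z := by
      rw [← hSCsymm]; exact ⟨w', hw', rfl⟩
    apply hcut (e.symm w') hw
    have himg : e.symm '' (SCset (e z) \ {w'}) = SCset z \ {e.symm w'} := by
      rw [Set.image_diff e.symm.injective, Set.image_singleton, hSCsymm]
    rw [← himg]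
    exact hP.image _ e.symm.continuous.continuousOn

/-- Any homeomorphism `h` of `L̄ⁿ` maps the set `W = {-Ω, Ω}ⁿ` onto itself, and the
induced permutation of `W` preserves adjacency in the hypercube graph, where `p, q ∈ W`
are adjacent iff they differ in exactly one coordinate. -/
theorem longLineBar_pow_homeomorph_hypercube (n : ℕ)
    (h : (Fin n → LongLineBar) ≃ₜ (Fin n → LongLineBar)) :
    (h '' {x | ∀ i, x i = ⊥ ∨ x i = ⊤} = {x | ∀ i, x i = ⊥ ∨ x i = ⊤}) ∧
    ∀ x y : Fin n → LongLineBar, (∀ i, x i = ⊥ ∨ x i = ⊤) → (∀ i, y i = ⊥ ∨ y i = ⊤) →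
      ((∃! i, x i ≠ y i) ↔ (∃! i, h x i ≠ h y i)) := by
  constructor
  · ext y
    simp only [Set.mem_image, Set.mem_setOf_eq]
    constructor
    · rintro ⟨x, hx, rfl⟩
      exact (mem_W_map_iff h x).2 hx
    · intro hy
      exact ⟨h.symm y, (mem_W_map_iff h.symm y).2 hy, h.apply_symm_apply y⟩
  · intro x y hx hy
    have hx' := (mem_W_map_iff h x).2 hx
    have hy' := (mem_W_map_iff h y).2 hy
    rw [← adj_iff hx hy, ← adj_iff hx' hy']
    constructor
    · exact adj_map h
    · intro hA
      have h2 := adj_map h.symm hA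
      rwa [h.symm_apply_apply, h.symm_apply_apply] at h2
end

section
/- The automorphism group of the n-dimensional hypercube graph (vertices {±1}ⁿ, edges between vertices differing in exactly one coordinate) is isomorphic to the semidirect product (ℤ/2ℤ)ⁿ ⋊ Sₙ, where Sₙ acts on (ℤ/2ℤ)ⁿ by permuting coordinates. -/
/-- Adjacency in the `n`-dimensional hypercube graph: two vertices of `(ℤ/2ℤ)ⁿ`
(identified with `{±1}ⁿ`) are adjacent iff they differ in exactly one coordinate. -/
def hypercubeAdj (n : ℕ) (x y : Fin n → ZMod 2) : Prop := ∃! i, x i ≠ y i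

/-- The automorphism group of the `n`-dimensional hypercube graph, realized as the
subgroup of permutations of the vertex set preserving adjacency. -/
def hypercubeAut (n : ℕ) : Subgroup (Equiv.Perm (Fin n → ZMod 2)) where
  carrier := {e | ∀ x y, hypercubeAdj n (e x) (e y) ↔ hypercubeAdj n x y}
  one_mem' := by intro x y; rfl
  mul_mem' := by
    intro a b ha hb x y
    exact (ha (b x) (b y)).trans (hb x y)
  inv_mem' := by
    intro a ha x y
    simpa using (ha (a⁻¹ x) (a⁻¹ y)).symm

/-- The coordinate-permutation additive automorphism of `(ℤ/2ℤ)ⁿ` induced by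
`σ ∈ Sₙ`. -/
def permAddAut (n : ℕ) (σ : Equiv.Perm (Fin n)) :
    (Fin n → ZMod 2) ≃+ (Fin n → ZMod 2) :=
  { Equiv.piCongrLeft' (fun _ => ZMod 2) σ with map_add' := fun _ _ => rfl }

/-- The action of `Sₙ` on `(ℤ/2ℤ)ⁿ` by permuting coordinates, as a homomorphism to the
automorphism group. -/
def permHom (n : ℕ) : Equiv.Perm (Fin n) →* MulAut (Multiplicative (Fin n → ZMod 2)) where
  toFun σ := AddEquiv.toMultiplicative (permAddAut n σ)
  map_one' := by
    ext x
    rfl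
  map_mul' σ τ := by
    ext x
    rfl

namespace HCProof
variable {n : ℕ}

lemma zmod2_ne_iff (a b : ZMod 2) : a ≠ b ↔ a + b ≠ 0 := by revert a b; decide

lemma zmod2_eq_of_ne_iff {a b : ZMod 2} (h : a ≠ 0 ↔ b ≠ 0) : a = b := by revert h; revert a b; decide

def supp (x : Fin n → ZMod 2) : Finset (Fin n) := Finset.univ.filter fun i => x i ≠ 0

def wt (x : Fin n → ZMod 2) : ℕ := (supp x).card

lemma mem_supp {x : Fin n → ZMod 2} {i : Fin n} : i ∈ supp x ↔ x i ≠ 0 := by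
  simp [supp]

lemma wt_eq_zero {x : Fin n → ZMod 2} : wt x = 0 ↔ x = 0 := by
  simp only [wt, Finset.card_eq_zero, Finset.eq_empty_iff_forall_notMem]
  constructor
  · intro h; funext i; have := h i; simp [mem_supp] at this; simpa using this
  · intro h i; simp [mem_supp, h]

lemma adj_iff {x y : Fin n → ZMod 2} : hypercubeAdj n x y ↔ wt (x + y) = 1 := by
  have hp : ∀ i, x i ≠ y i ↔ (x + y) i ≠ 0 := fun i => zmod2_ne_iff _ _
  rw [wt, Finset.card_eq_one]
  constructor
  · rintro ⟨i, hi, hu⟩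
    refine ⟨i, ?_⟩
    ext j
    simp only [mem_supp, Finset.mem_singleton]
    constructor
    · intro hj; exact hu j ((hp j).mpr hj)
    · rintro rfl; exact (hp _).mp hi
  · rintro ⟨i, hi⟩
    refine ⟨i, (hp i).mpr ?_, fun j hj => ?_⟩
    · have : i ∈ supp (x + y) := by rw [hi]; simp
      exact mem_supp.mp this
    · have : j ∈ supp (x + y) := mem_supp.mpr ((hp j).mp hj)
      rw [hi] at this; simpa using this

lemma wt_triangle (x y z : Fin n → ZMod 2) : wt (x + y) ≤ wt (x + z) + wt (z + y) := by
  have hsub : supp (x + y) ⊆ supp (x + z) ∪ supp (z + y) := by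
    intro i hi
    rw [mem_supp] at hi
    simp only [Finset.mem_union, mem_supp]
    by_contra h
    push_neg at h
    obtain ⟨h1, h2⟩ := h
    apply hi
    have hz : z i + z i = 0 := by clear hi h1 h2; generalize z i = a; revert a; decide
    have h3 : (x + z) i + (z + y) i = (x + y) i := by
      simp only [Pi.add_apply]
      rw [show x i + z i + (z i + y i) = x i + y i + (z i + z i) by ring, hz, add_zero]
    rw [← h3, h1, h2, add_zero]
  calc wt (x + y) ≤ (supp (x + z) ∪ supp (z + y)).card := Finset.card_le_card hsub
    _ ≤ _ := Finset.card_union_le _ _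


variable {n : ℕ}

lemma add_self_eq_zero' (x : Fin n → ZMod 2) : x + x = 0 := by
  funext i; simp only [Pi.add_apply, Pi.zero_apply]; generalize x i = a; revert a; decide

lemma wt_add_eq_zero {x y : Fin n → ZMod 2} : wt (x + y) = 0 ↔ x = y := by
  rw [wt_eq_zero]
  constructor
  · intro h
    have := congrArg (· + y) h
    simpa [add_assoc, add_self_eq_zero'] using this
  · rintro rfl; exact add_self_eq_zero' x

def reach : ℕ → (Fin n → ZMod 2) → (Fin n → ZMod 2) → Prop
  | 0, x, y => x = y
  | (k+1), x, y => ∃ z, (hypercubeAdj n x z ∨ x = z) ∧ reach k z y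

lemma reach_iff : ∀ (k : ℕ) (x y : Fin n → ZMod 2), reach k x y ↔ wt (x + y) ≤ k := by
  intro k
  induction k with
  | zero =>
    intro x y
    simp only [reach, Nat.le_zero, wt_add_eq_zero]
  | succ k ih =>
    intro x y
    constructor
    · rintro ⟨z, hz, hr⟩
      have h2 : wt (z + y) ≤ k := (ih z y).mp hr
      have h1 : wt (x + z) ≤ 1 := by
        rcases hz with h | h
        · exact le_of_eq (adj_iff.mp h)
        · rw [h]; simp [wt_add_eq_zero.mpr rfl]  -- wt (z+z)=0
      calc wt (x + y) ≤ wt (x + z) + wt (z + y) := wt_triangle x y z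
        _ ≤ 1 + k := Nat.add_le_add h1 h2
        _ = k + 1 := Nat.add_comm 1 k
    · intro h
      by_cases hxy : x = y
      · exact ⟨x, Or.inr rfl, (ih x y).mpr (by subst hxy; simp [wt_add_eq_zero.mpr rfl])⟩
      · have hne : wt (x + y) ≠ 0 := fun h0 => hxy (wt_add_eq_zero.mp h0)
        have hpos : ∃ i, (x + y) i ≠ 0 := by
          by_contra hc
          push_neg at hc
          exact hne (wt_eq_zero.mpr (funext fun i => hc i))
        obtain ⟨i, hi⟩ := hpos
        set z := Function.update x i (y i) with hzdef
        have hadj : hypercubeAdj n x z := by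
          refine ⟨i, ?_, fun j hj => ?_⟩
          · simp only [hzdef, Function.update_self]
            exact (zmod2_ne_iff _ _).mpr hi
          · by_contra hji
            apply hj
            simp [hzdef, Function.update_of_ne hji]
        have hsupp : supp (z + y) = (supp (x + y)).erase i := by
          ext j
          simp only [Finset.mem_erase, mem_supp]
          by_cases hji : j = i
          · subst hji
            simp [hzdef, add_self_eq_zero', Function.update_self]
            generalize y j = a; revert a; decide
          · simp [hzdef, Function.update_of_ne hji, hji]
        have hwz : wt (z + y) ≤ k := by
          have : wt (z + y) = wt (x + y) - 1 := by
            rw [wt, hsupp, Finset.card_erase_of_mem (mem_supp.mpr hi)]; rfl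
          omega
        exact ⟨z, Or.inl hadj, (ih z y).mpr hwz⟩

lemma reach_pres {e : Equiv.Perm (Fin n → ZMod 2)} (he : e ∈ hypercubeAut n) :
    ∀ (k : ℕ) (x y : Fin n → ZMod 2), reach k (e x) (e y) ↔ reach k x y := by
  intro k
  induction k with
  | zero => intro x y; simp only [reach]; exact ⟨fun h => e.injective h, fun h => congrArg e h⟩
  | succ k ih =>
    intro x y
    constructor
    · rintro ⟨z, hz, hr⟩
      refine ⟨e.symm z, ?_, ?_⟩
      · rcases hz with h | h
        · left; have := (he x (e.symm z)); rw [Equiv.apply_symm_apply] at this; exact this.mp h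
        · right; exact e.injective (by rw [Equiv.apply_symm_apply]; exact h)
      · apply (ih _ y).mp; rwa [Equiv.apply_symm_apply]
    · rintro ⟨z, hz, hr⟩
      refine ⟨e z, ?_, (ih z y).mpr hr⟩
      rcases hz with h | h
      · left; exact (he x z).mpr h
      · right; exact congrArg e h

lemma wt_pres {e : Equiv.Perm (Fin n → ZMod 2)} (he : e ∈ hypercubeAut n)
    (x y : Fin n → ZMod 2) : wt (e x + e y) = wt (x + y) := by
  apply le_antisymm
  · exact (reach_iff _ _ _).mp ((reach_pres he _ x y).mpr ((reach_iff _ _ _).mpr le_rfl))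
  · exact (reach_iff _ _ _).mp ((reach_pres he _ x y).mp ((reach_iff _ _ _).mpr le_rfl))


variable {n : ℕ}

lemma wt_eq_one {x : Fin n → ZMod 2} : wt x = 1 ↔ ∃ j, x = Pi.single j 1 := by
  rw [wt, Finset.card_eq_one]
  constructor
  · rintro ⟨j, hj⟩
    refine ⟨j, funext fun k => ?_⟩
    by_cases hk : k = j
    · subst hk
      have : x k ≠ 0 := mem_supp.mp (by rw [hj]; simp)
      rw [Pi.single_eq_same]
      revert this; generalize x k = a; revert a; decide
    · have : x k = 0 := by
        by_contra hc
        have : k ∈ supp x := mem_supp.mpr hc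
        rw [hj] at this; simp at this; exact hk this
      rw [this, Pi.single_eq_of_ne hk]
  · rintro ⟨j, rfl⟩
    refine ⟨j, ?_⟩
    ext k
    simp only [mem_supp, Finset.mem_singleton]
    by_cases hk : k = j
    · subst hk; simp
    · simp [Pi.single_eq_of_ne hk, hk]

lemma key_lt {a : Fin n → ZMod 2} {i : Fin n} :
    a i ≠ 0 ↔ wt (a + Pi.single i 1) < wt a := by
  by_cases h : a i = 0
  · simp only [h, ne_eq, not_true_eq_false, false_iff, not_lt]
    have : supp (a + Pi.single i 1) = insert i (supp a) := by
      ext j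
      simp only [mem_supp, Finset.mem_insert]
      by_cases hj : j = i
      · subst hj; simp [h]
      · simp [Pi.single_eq_of_ne hj, hj]
    rw [wt, wt, this]
    exact le_trans (Finset.card_le_card (Finset.subset_insert _ _)) le_rfl
  · simp only [h, ne_eq, not_false_eq_true, true_iff]
    have h1 : a i = 1 := by revert h; generalize a i = b; revert b; decide
    have : supp (a + Pi.single i 1) = (supp a).erase i := by
      ext j
      simp only [mem_supp, Finset.mem_erase]
      by_cases hj : j = i
      · subst hj; simp [h1]; decide
      · simp [Pi.single_eq_of_ne hj, hj]
    rw [wt, wt, this, Finset.card_erase_of_mem (mem_supp.mpr h)]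
    have : 0 < (supp a).card := Finset.card_pos.mpr ⟨i, mem_supp.mpr h⟩
    omega

/-- The action of the semidirect product on vertices. -/
def act (g : SemidirectProduct (Multiplicative (Fin n → ZMod 2)) (Equiv.Perm (Fin n)) (permHom n)) :
    Equiv.Perm (Fin n → ZMod 2) :=
  (permAddAut n g.right).toEquiv.trans (Equiv.addLeft (Multiplicative.toAdd g.left))

lemma act_apply (g) (x : Fin n → ZMod 2) :
    act g x = Multiplicative.toAdd g.left + permAddAut n g.right x := rfl

lemma permAddAut_apply (σ : Equiv.Perm (Fin n)) (x : Fin n → ZMod 2) (j : Fin n) :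
    permAddAut n σ x j = x (σ.symm j) := rfl

def Phi : SemidirectProduct (Multiplicative (Fin n → ZMod 2)) (Equiv.Perm (Fin n)) (permHom n) →*
    Equiv.Perm (Fin n → ZMod 2) where
  toFun := act
  map_one' := by
    ext x
    simp [act_apply]
    rfl
  map_mul' a b := by
    apply Equiv.ext
    intro x
    rw [Equiv.Perm.mul_apply, act_apply, act_apply, act_apply]
    show Multiplicative.toAdd (a.left * (permHom n a.right) b.left) +
      permAddAut n (a.right * b.right) x = _
    have h1 : Multiplicative.toAdd (a.left * (permHom n a.right) b.left) =
        Multiplicative.toAdd a.left + permAddAut n a.right (Multiplicative.toAdd b.left) := rfl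
    have h2 : permAddAut n (a.right * b.right) x =
        permAddAut n a.right (permAddAut n b.right x) := rfl
    rw [h1, h2, map_add]
    abel

lemma act_mem (g) : (act g : Equiv.Perm (Fin n → ZMod 2)) ∈ hypercubeAut n := by
  intro x y
  unfold hypercubeAdj
  have hp : ∀ i, act g x i ≠ act g y i ↔ x (g.right⁻¹ i) ≠ y (g.right⁻¹ i) := by
    intro i
    show Multiplicative.toAdd g.left i + x (g.right⁻¹ i) ≠
      Multiplicative.toAdd g.left i + y (g.right⁻¹ i) ↔ _
    constructor
    · intro h hc; exact h (by rw [hc])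
    · intro h hc; exact h (add_left_cancel hc)
  constructor
  · rintro ⟨i, hi, hu⟩
    refine ⟨g.right⁻¹ i, (hp i).mp hi, fun j hj => ?_⟩
    have := hu (g.right j) ((hp (g.right j)).mpr (by simpa using hj))
    have : g.right j = i := this
    simp [← this]
  · rintro ⟨i, hi, hu⟩
    refine ⟨g.right i, (hp (g.right i)).mpr (by simpa using hi), fun j hj => ?_⟩
    have := hu (g.right⁻¹ j) ((hp j).mp hj)
    rw [← this]; simp

lemma Phi_injective : Function.Injective (Phi (n := n)) := by
  rw [← MonoidHom.ker_eq_bot_iff, eq_bot_iff]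
  intro g hg
  have hg1 : act g = 1 := hg
  have h0 : Multiplicative.toAdd g.left = 0 := by
    have h00 : act g 0 = 0 := by rw [hg1]; rfl
    rw [act_apply] at h00
    simpa using h00
  have hleft : g.left = 1 := h0
  have hright : g.right = 1 := by
    have hpt : ∀ i, g.right i = i := by
      intro i
      have hx : act g (Pi.single i 1) = Pi.single i 1 := by rw [hg1]; rfl
      have h2 := congrFun hx (g.right i)
      rw [act_apply, Pi.add_apply, h0, Pi.zero_apply, zero_add, permAddAut_apply,
        Equiv.symm_apply_apply, Pi.single_eq_same] at h2
      by_contra hne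
      rw [Pi.single_eq_of_ne hne] at h2
      exact one_ne_zero h2
    exact Equiv.ext hpt
  have : g = 1 := SemidirectProduct.ext hleft hright
  simp [this]

lemma Phi_surj {e : Equiv.Perm (Fin n → ZMod 2)} (he : e ∈ hypercubeAut n) :
    ∃ g, Phi g = e := by
  classical
  -- translate so that 0 is fixed
  set v : Fin n → ZMod 2 := e 0 with hv
  set t : Equiv.Perm (Fin n → ZMod 2) := Equiv.addLeft v with ht
  have htmem : t ∈ hypercubeAut n := by
    intro x y
    unfold hypercubeAdj
    have : ∀ i, t x i ≠ t y i ↔ x i ≠ y i := by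
      intro i
      show v i + x i ≠ v i + y i ↔ _
      constructor
      · intro h hc; exact h (by rw [hc])
      · intro h hc; exact h (add_left_cancel hc)
    constructor
    · rintro ⟨i, hi, hu⟩; exact ⟨i, (this i).mp hi, fun j hj => hu j ((this j).mpr hj)⟩
    · rintro ⟨i, hi, hu⟩; exact ⟨i, (this i).mpr hi, fun j hj => hu j ((this j).mp hj)⟩
  set f : Equiv.Perm (Fin n → ZMod 2) := t⁻¹ * e with hf
  have hfmem : f ∈ hypercubeAut n := (hypercubeAut n).mul_mem ((hypercubeAut n).inv_mem htmem) he
  have hf0 : f 0 = 0 := by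
    show t⁻¹ (e 0) = 0
    rw [ht]
    show (Equiv.addLeft v).symm (e 0) = 0
    simp [hv]
  have hwt : ∀ x, wt (f x) = wt x := by
    intro x
    have := wt_pres hfmem x 0
    rw [hf0] at this
    simpa using this
  -- f maps basis vectors to basis vectors
  have hbasis : ∀ i : Fin n, ∃ j, f (Pi.single i 1) = Pi.single j 1 := by
    intro i
    apply wt_eq_one.mp
    rw [hwt]
    exact wt_eq_one.mpr ⟨i, rfl⟩
  choose σ0 hσ0 using hbasis
  have hσinj : Function.Injective σ0 := by
    intro i j hij
    have : f (Pi.single i 1) = f (Pi.single j 1) := by rw [hσ0, hσ0, hij]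
    have h2 := f.injective this
    by_contra hne
    have := congrFun h2 i
    rw [Pi.single_eq_same, Pi.single_eq_of_ne hne] at this
    exact one_ne_zero this
  have hσbij : Function.Bijective σ0 := (Finite.injective_iff_bijective).mp hσinj
  set σ : Equiv.Perm (Fin n) := Equiv.ofBijective σ0 hσbij with hσ
  -- main claim
  have hmain : ∀ (x : Fin n → ZMod 2) (i : Fin n), f x (σ i) = x i := by
    intro x i
    apply zmod2_eq_of_ne_iff
    rw [show (σ i) = σ0 i from rfl]
    constructor
    · intro h
      have h1 : wt (f x + Pi.single (σ0 i) 1) < wt (f x) := key_lt.mp h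
      rw [← hσ0] at h1
      rw [wt_pres hfmem, hwt] at h1
      exact key_lt.mpr h1
    · intro h
      have h1 : wt (x + Pi.single i 1) < wt x := key_lt.mp h
      rw [← wt_pres hfmem x (Pi.single i 1), ← hwt x, hσ0] at h1
      exact key_lt.mpr h1
  refine ⟨⟨Multiplicative.ofAdd v, σ⟩, ?_⟩
  apply Equiv.ext
  intro x
  show act ⟨Multiplicative.ofAdd v, σ⟩ x = e x
  rw [act_apply]
  have hfx : permAddAut n σ x = f x := by
    funext j
    have : f x (σ (σ⁻¹ j)) = x (σ⁻¹ j) := hmain x (σ⁻¹ j)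
    rw [← Equiv.Perm.mul_apply, mul_inv_cancel, Equiv.Perm.one_apply] at this
    exact this.symm
  show Multiplicative.toAdd (Multiplicative.ofAdd v) + permAddAut n σ x = e x
  rw [hfx]
  show v + f x = e x
  have : t (f x) = e x := by
    rw [hf]
    show t ((t⁻¹ * e) x) = e x
    simp
  rw [← this]
  rfl

end HCProof

/-- The automorphism group of the `n`-dimensional hypercube graph is isomorphic to the
semidirect product `(ℤ/2ℤ)ⁿ ⋊ Sₙ`, with `Sₙ` acting by permuting coordinates. -/
theorem hypercubeAut_iso_semidirect (n : ℕ) :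
    Nonempty ((hypercubeAut n) ≃*
      SemidirectProduct (Multiplicative (Fin n → ZMod 2)) (Equiv.Perm (Fin n)) (permHom n)) := by
  have hrange : (HCProof.Phi (n := n)).range = hypercubeAut n := by
    apply le_antisymm
    · rintro _ ⟨g, rfl⟩
      exact HCProof.act_mem g
    · intro e he
      exact HCProof.Phi_surj he
  exact ⟨(MulEquiv.subgroupCongr hrange.symm).trans
    (MonoidHom.ofInjective HCProof.Phi_injective).symm⟩
end
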